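/- arXiv:2006.01798 — 3 statements merged into one kernel-verified Lean document; each statement's English description precedes it below -/
import Mathlib

section
/- Let n ≥ 4 and b₄,…,bₙ ∈ ℂ. On U = {x ∈ ℝⁿ : x₁² + x₂² + x₃² > 0}, the function φ(x) = √(x₁² + x₂² + x₃²) + Σ_{k=4}^n bₖ·xₖ satisfies κ(φ,φ) = 0 if and only if 1 + b₄² + ⋯ + bₙ² = 0; and under this condition φ satisfies τ²(φ) = 0 and τ²(φ²) = 0 while τ(φ) ≠ 0 (so φ is a proper (2,1)-harmonic morphism). -/
open scoped BigOperators ContDiff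
open Complex

noncomputable section

variable {G : Type*} [NormedAddCommGroup G] [NormedSpace ℝ G]

/-- Partial derivative in the `i`-th coordinate direction on Euclidean space. -/
def pd {n : ℕ} (i : Fin n) (f : EuclideanSpace ℝ (Fin n) → G) :
    EuclideanSpace ℝ (Fin n) → G :=
  fun x => fderiv ℝ f x (EuclideanSpace.single i 1)

/-- The Euclidean Laplace–Beltrami operator (extended linearly to vector-valued maps). -/
def lap {n : ℕ} (f : EuclideanSpace ℝ (Fin n) → G) :
    EuclideanSpace ℝ (Fin n) → G :=
  fun x => ∑ i, pd i (pd i f) x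

/-- The conformality operator `κ(z,w) = g(∇z, ∇w)` (complex-bilinear extension). -/
def kap {n : ℕ} (f g : EuclideanSpace ℝ (Fin n) → ℂ) :
    EuclideanSpace ℝ (Fin n) → ℂ :=
  fun x => ∑ i, pd i f x * pd i g x

namespace HM21

lemma pd_eq {n : ℕ} {f : EuclideanSpace ℝ (Fin n) → G}
    {L : EuclideanSpace ℝ (Fin n) →L[ℝ] G} {x} (h : HasFDerivAt f L x) (i : Fin n) :
    pd i f x = L (EuclideanSpace.single i 1) := by
  rw [pd, h.fderiv]

lemma pd_congr {n : ℕ} {f g : EuclideanSpace ℝ (Fin n) → G} {s : Set (EuclideanSpace ℝ (Fin n))}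
    (hs : IsOpen s) (h : ∀ y ∈ s, f y = g y) {x} (hx : x ∈ s) (i : Fin n) :
    pd i f x = pd i g x := by
  have : f =ᶠ[nhds x] g := Filter.eventuallyEq_of_mem (hs.mem_nhds hx) h
  rw [pd, this.fderiv_eq]; rfl

lemma pd_const {n : ℕ} (c : G) (x : EuclideanSpace ℝ (Fin n)) (i : Fin n) :
    pd i (fun _ => c) x = 0 := by
  simp [pd]

lemma pd_ofReal {n : ℕ} {f : EuclideanSpace ℝ (Fin n) → ℝ} {x}
    (hf : DifferentiableAt ℝ f x) (i : Fin n) :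
    pd i (fun y => (f y : ℂ)) x = ((pd i f x : ℝ) : ℂ) := by
  have := pd_eq ((Complex.ofRealCLM.hasFDerivAt (x := f x)).comp x hf.hasFDerivAt) i
  simpa [Function.comp_def, pd] using this

lemma diff_ofReal {n : ℕ} {f : EuclideanSpace ℝ (Fin n) → ℝ} {x}
    (hf : DifferentiableAt ℝ f x) :
    DifferentiableAt ℝ (fun y => (f y : ℂ)) x :=
  Complex.ofRealCLM.differentiableAt.comp x hf

lemma pd_add {n : ℕ} {f g : EuclideanSpace ℝ (Fin n) → G} {x}
    (hf : DifferentiableAt ℝ f x) (hg : DifferentiableAt ℝ g x) (i : Fin n) :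
    pd i (fun y => f y + g y) x = pd i f x + pd i g x := by
  simp [pd, fderiv_fun_add hf hg]

lemma pd_sub {n : ℕ} {f g : EuclideanSpace ℝ (Fin n) → G} {x}
    (hf : DifferentiableAt ℝ f x) (hg : DifferentiableAt ℝ g x) (i : Fin n) :
    pd i (fun y => f y - g y) x = pd i f x - pd i g x := by
  simp [pd, fderiv_fun_sub hf hg]

lemma pd_mul {n : ℕ} {f g : EuclideanSpace ℝ (Fin n) → ℂ} {x}
    (hf : DifferentiableAt ℝ f x) (hg : DifferentiableAt ℝ g x) (i : Fin n) :
    pd i (fun y => f y * g y) x = pd i f x * g x + f x * pd i g x := by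
  rw [pd, fderiv_fun_mul hf hg]
  simp [pd, smul_eq_mul]
  ring

lemma pd_const_mul {n : ℕ} {𝔸 : Type*} [NormedRing 𝔸] [NormedAlgebra ℝ 𝔸]
    {f : EuclideanSpace ℝ (Fin n) → 𝔸} {x}
    (hf : DifferentiableAt ℝ f x) (c : 𝔸) (i : Fin n) :
    pd i (fun y => c * f y) x = c * pd i f x := by
  rw [pd, fderiv_const_mul hf c]
  simp [pd, smul_eq_mul]

lemma sum_split {M : Type*} [AddCommMonoid M] {n : ℕ} (hn : 4 ≤ n) (f : Fin n → M) :
    ∑ i, f i = f ⟨0, Nat.lt_of_lt_of_le (by norm_num) hn⟩ + f ⟨1, Nat.lt_of_lt_of_le (by norm_num) hn⟩ + f ⟨2, Nat.lt_of_lt_of_le (by norm_num) hn⟩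
      + ∑ i ∈ Finset.univ.filter (fun k : Fin n => 3 ≤ (k : ℕ)), f i := by
  classical
  have h : Finset.univ.filter (fun k : Fin n => ¬ 3 ≤ (k : ℕ)) =
      ({⟨0, Nat.lt_of_lt_of_le (by norm_num) hn⟩, ⟨1, Nat.lt_of_lt_of_le (by norm_num) hn⟩, ⟨2, Nat.lt_of_lt_of_le (by norm_num) hn⟩} : Finset (Fin n)) := by
    ext i
    simp only [Finset.mem_filter, Finset.mem_univ, true_and, Finset.mem_insert,
      Finset.mem_singleton, Fin.ext_iff]
    omega
  rw [← Finset.sum_filter_add_sum_filter_not Finset.univ (fun k : Fin n => 3 ≤ (k : ℕ)) f, h]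
  rw [Finset.sum_insert (by simp [Fin.ext_iff]), Finset.sum_insert (by simp [Fin.ext_iff]),
    Finset.sum_singleton]
  abel

end HM21

section Q3

variable {n : ℕ}

def q3 (i0 i1 i2 : Fin n) : EuclideanSpace ℝ (Fin n) → ℝ :=
  fun y => y i0 ^ 2 + y i1 ^ 2 + y i2 ^ 2

def gradq3 (i0 i1 i2 : Fin n) (x : EuclideanSpace ℝ (Fin n)) :
    EuclideanSpace ℝ (Fin n) →L[ℝ] ℝ :=
  (2 * x i0) • (EuclideanSpace.proj i0 : _ →L[ℝ] ℝ) + (2 * x i1) • EuclideanSpace.proj i1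
    + (2 * x i2) • EuclideanSpace.proj i2

lemma hasFDerivAt_q3 (i0 i1 i2 : Fin n) (x : EuclideanSpace ℝ (Fin n)) :
    HasFDerivAt (q3 i0 i1 i2) (gradq3 i0 i1 i2 x) x := by
  have h : ∀ j : Fin n, HasFDerivAt (fun y : EuclideanSpace ℝ (Fin n) => y j ^ 2)
      ((2 * x j) • (EuclideanSpace.proj j : _ →L[ℝ] ℝ)) x := by
    intro j
    have h1 := (EuclideanSpace.proj j (𝕜 := ℝ)).hasFDerivAt (x := x)
    have h2 : HasFDerivAt (fun y : EuclideanSpace ℝ (Fin n) => y j ^ 2)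
        ((x j • (EuclideanSpace.proj j : _ →L[ℝ] ℝ)) + x j • EuclideanSpace.proj j) x := by
      simpa [pow_two] using h1.fun_mul h1
    exact h2.congr_fderiv (ContinuousLinearMap.ext fun v => by simp; ring)
  exact ((h i0).add (h i1)).add (h i2)

lemma diff_q3 (i0 i1 i2 : Fin n) (x : EuclideanSpace ℝ (Fin n)) :
    DifferentiableAt ℝ (q3 i0 i1 i2) x :=
  (hasFDerivAt_q3 i0 i1 i2 x).differentiableAt

lemma cont_q3 (i0 i1 i2 : Fin n) : Continuous (q3 i0 i1 i2) := by
  unfold q3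
  exact ((((EuclideanSpace.proj i0 (𝕜 := ℝ)).continuous).pow 2).add
    (((EuclideanSpace.proj i1 (𝕜 := ℝ)).continuous).pow 2)).add
    (((EuclideanSpace.proj i2 (𝕜 := ℝ)).continuous).pow 2)

lemma gradq3_apply (i0 i1 i2 : Fin n) (x : EuclideanSpace ℝ (Fin n)) (i : Fin n) :
    gradq3 i0 i1 i2 x (EuclideanSpace.single i 1)
      = 2 * x i0 * (if i = i0 then 1 else 0) + 2 * x i1 * (if i = i1 then 1 else 0)
        + 2 * x i2 * (if i = i2 then 1 else 0) := by
  simp [gradq3, EuclideanSpace.single_apply, mul_ite, eq_comm]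

end Q3

section Derivs

variable {n : ℕ} (i0 i1 i2 : Fin n)

lemma gradq3_apply_T (h01 : i0 ≠ i1) (h02 : i0 ≠ i2) (h12 : i1 ≠ i2)
    (x : EuclideanSpace ℝ (Fin n)) {j : Fin n} (hT : j = i0 ∨ j = i1 ∨ j = i2) :
    gradq3 i0 i1 i2 x (EuclideanSpace.single j 1) = 2 * x j := by
  rcases hT with rfl | rfl | rfl <;>
    rw [gradq3_apply] <;>
    simp [h01, h02, h12, Ne.symm h01, Ne.symm h02, Ne.symm h12]

lemma gradq3_apply_nT (x : EuclideanSpace ℝ (Fin n)) {j : Fin n}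
    (hK : ¬(j = i0 ∨ j = i1 ∨ j = i2)) :
    gradq3 i0 i1 i2 x (EuclideanSpace.single j 1) = 0 := by
  push_neg at hK
  rw [gradq3_apply]
  simp [hK.1, hK.2.1, hK.2.2]

variable {x : EuclideanSpace ℝ (Fin n)}

lemma sqrt_q3_pos (hx : 0 < q3 i0 i1 i2 x) : 0 < Real.sqrt (q3 i0 i1 i2 x) := Real.sqrt_pos.2 hx

lemma hasFDerivAt_sqrt_q3 (hx : 0 < q3 i0 i1 i2 x) :
    HasFDerivAt (fun y => Real.sqrt (q3 i0 i1 i2 y))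
      ((1 / (2 * Real.sqrt (q3 i0 i1 i2 x))) • gradq3 i0 i1 i2 x) x :=
  (Real.hasDerivAt_sqrt hx.ne').comp_hasFDerivAt x (hasFDerivAt_q3 i0 i1 i2 x)

lemma diff_sqrt_q3 (hx : 0 < q3 i0 i1 i2 x) : DifferentiableAt ℝ (fun y => Real.sqrt (q3 i0 i1 i2 y)) x :=
  (hasFDerivAt_sqrt_q3 i0 i1 i2 hx).differentiableAt

lemma pd_r_T (hx : 0 < q3 i0 i1 i2 x) (h01 : i0 ≠ i1) (h02 : i0 ≠ i2) (h12 : i1 ≠ i2)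
    {j : Fin n} (hT : j = i0 ∨ j = i1 ∨ j = i2) :
    pd j (fun y => Real.sqrt (q3 i0 i1 i2 y)) x = x j / Real.sqrt (q3 i0 i1 i2 x) := by
  rw [HM21.pd_eq (hasFDerivAt_sqrt_q3 i0 i1 i2 hx) j, ContinuousLinearMap.smul_apply,
    gradq3_apply_T i0 i1 i2 h01 h02 h12 x hT, smul_eq_mul]
  have h0 := (sqrt_q3_pos i0 i1 i2 hx).ne'
  field_simp

lemma pd_r_nT (hx : 0 < q3 i0 i1 i2 x) {j : Fin n} (hK : ¬(j = i0 ∨ j = i1 ∨ j = i2)) :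
    pd j (fun y => Real.sqrt (q3 i0 i1 i2 y)) x = 0 := by
  rw [HM21.pd_eq (hasFDerivAt_sqrt_q3 i0 i1 i2 hx) j, ContinuousLinearMap.smul_apply,
    gradq3_apply_nT i0 i1 i2 x hK, smul_eq_mul, mul_zero]

lemma hasFDerivAt_rinv (hx : 0 < q3 i0 i1 i2 x) (m : ℕ) :
    HasFDerivAt (fun y => (Real.sqrt (q3 i0 i1 i2 y) ^ m)⁻¹)
      ((-((m : ℝ) * Real.sqrt (q3 i0 i1 i2 x) ^ (m - 1) * (1 / (2 * Real.sqrt (q3 i0 i1 i2 x))))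
          / (Real.sqrt (q3 i0 i1 i2 x) ^ m) ^ 2) • gradq3 i0 i1 i2 x) x := by
  have h1 : HasDerivAt (fun t => (Real.sqrt t ^ m)⁻¹)
      (-((m : ℝ) * Real.sqrt (q3 i0 i1 i2 x) ^ (m - 1) * (1 / (2 * Real.sqrt (q3 i0 i1 i2 x))))
        / (Real.sqrt (q3 i0 i1 i2 x) ^ m) ^ 2) (q3 i0 i1 i2 x) :=
    ((Real.hasDerivAt_sqrt hx.ne').pow m).inv
      (pow_ne_zero m (sqrt_q3_pos i0 i1 i2 hx).ne')
  exact h1.comp_hasFDerivAt x (hasFDerivAt_q3 i0 i1 i2 x)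

lemma diff_rinv (hx : 0 < q3 i0 i1 i2 x) (m : ℕ) :
    DifferentiableAt ℝ (fun y => (Real.sqrt (q3 i0 i1 i2 y) ^ m)⁻¹) x :=
  (hasFDerivAt_rinv i0 i1 i2 hx m).differentiableAt

lemma pd_rinv_T (hx : 0 < q3 i0 i1 i2 x) (h01 : i0 ≠ i1) (h02 : i0 ≠ i2) (h12 : i1 ≠ i2)
    {j : Fin n} (hT : j = i0 ∨ j = i1 ∨ j = i2) {m : ℕ} (hm : m ≠ 0) :
    pd j (fun y => (Real.sqrt (q3 i0 i1 i2 y) ^ m)⁻¹) x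
      = -((m : ℝ) * x j) / Real.sqrt (q3 i0 i1 i2 x) ^ (m + 2) := by
  obtain ⟨k, rfl⟩ := Nat.exists_eq_succ_of_ne_zero hm
  rw [HM21.pd_eq (hasFDerivAt_rinv i0 i1 i2 hx (k + 1)) j, ContinuousLinearMap.smul_apply,
    gradq3_apply_T i0 i1 i2 h01 h02 h12 x hT, smul_eq_mul]
  have h0 := (sqrt_q3_pos i0 i1 i2 hx).ne'
  simp only [Nat.succ_eq_add_one, Nat.add_sub_cancel]
  field_simp
  ring

lemma pd_rinv_nT (hx : 0 < q3 i0 i1 i2 x) {j : Fin n} (hK : ¬(j = i0 ∨ j = i1 ∨ j = i2)) (m : ℕ) :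
    pd j (fun y => (Real.sqrt (q3 i0 i1 i2 y) ^ m)⁻¹) x = 0 := by
  rw [HM21.pd_eq (hasFDerivAt_rinv i0 i1 i2 hx m) j, ContinuousLinearMap.smul_apply,
    gradq3_apply_nT i0 i1 i2 x hK, smul_eq_mul, mul_zero]

lemma hasFDerivAt_A (hx : 0 < q3 i0 i1 i2 x) (j : Fin n) (m : ℕ) :
    HasFDerivAt (fun y => y j * (Real.sqrt (q3 i0 i1 i2 y) ^ m)⁻¹)
      (x j • ((-((m : ℝ) * Real.sqrt (q3 i0 i1 i2 x) ^ (m - 1)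
            * (1 / (2 * Real.sqrt (q3 i0 i1 i2 x))))
          / (Real.sqrt (q3 i0 i1 i2 x) ^ m) ^ 2) • gradq3 i0 i1 i2 x)
        + (Real.sqrt (q3 i0 i1 i2 x) ^ m)⁻¹ • (EuclideanSpace.proj j : _ →L[ℝ] ℝ)) x :=
  ((EuclideanSpace.proj j (𝕜 := ℝ)).hasFDerivAt (x := x)).mul (hasFDerivAt_rinv i0 i1 i2 hx m)

lemma diff_A (hx : 0 < q3 i0 i1 i2 x) (j : Fin n) (m : ℕ) :
    DifferentiableAt ℝ (fun y => y j * (Real.sqrt (q3 i0 i1 i2 y) ^ m)⁻¹) x :=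
  (hasFDerivAt_A i0 i1 i2 hx j m).differentiableAt

lemma pd_A_T (hx : 0 < q3 i0 i1 i2 x) (h01 : i0 ≠ i1) (h02 : i0 ≠ i2) (h12 : i1 ≠ i2)
    {j : Fin n} (hT : j = i0 ∨ j = i1 ∨ j = i2) {m : ℕ} (hm : m ≠ 0) :
    pd j (fun y => y j * (Real.sqrt (q3 i0 i1 i2 y) ^ m)⁻¹) x
      = (Real.sqrt (q3 i0 i1 i2 x) ^ m)⁻¹
        - (m : ℝ) * x j ^ 2 / Real.sqrt (q3 i0 i1 i2 x) ^ (m + 2) := by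
  obtain ⟨k, rfl⟩ := Nat.exists_eq_succ_of_ne_zero hm
  rw [HM21.pd_eq (hasFDerivAt_A i0 i1 i2 hx j (k + 1)) j]
  have h0 := (sqrt_q3_pos i0 i1 i2 hx).ne'
  have hj : (EuclideanSpace.proj j : _ →L[ℝ] ℝ) (EuclideanSpace.single j 1) = 1 := by
    simp [EuclideanSpace.single_apply]
  rw [ContinuousLinearMap.add_apply, ContinuousLinearMap.smul_apply,
    ContinuousLinearMap.smul_apply, ContinuousLinearMap.smul_apply,
    gradq3_apply_T i0 i1 i2 h01 h02 h12 x hT, hj]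
  simp only [smul_eq_mul, Nat.succ_eq_add_one, Nat.add_sub_cancel, mul_one]
  field_simp
  ring

end Derivs

section Main

lemma sum_split3 {M : Type*} [AddCommMonoid M] {n : ℕ} (hn : 4 ≤ n)
    (i0 i1 i2 : Fin n) (hv0 : (i0 : ℕ) = 0) (hv1 : (i1 : ℕ) = 1) (hv2 : (i2 : ℕ) = 2)
    (f : Fin n → M) :
    ∑ i, f i = f i0 + f i1 + f i2
      + ∑ i ∈ Finset.univ.filter (fun k : Fin n => 3 ≤ (k : ℕ)), f i := by
  have e0 : i0 = ⟨0, Nat.lt_of_lt_of_le (by norm_num) hn⟩ := Fin.ext hv0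
  have e1 : i1 = ⟨1, Nat.lt_of_lt_of_le (by norm_num) hn⟩ := Fin.ext hv1
  have e2 : i2 = ⟨2, Nat.lt_of_lt_of_le (by norm_num) hn⟩ := Fin.ext hv2
  rw [e0, e1, e2]
  exact HM21.sum_split hn f

set_option maxHeartbeats 1000000 in
lemma main_lemma {n : ℕ} (hn : 4 ≤ n) (b : Fin n → ℂ) (i0 i1 i2 : Fin n)
    (hv0 : (i0 : ℕ) = 0) (hv1 : (i1 : ℕ) = 1) (hv2 : (i2 : ℕ) = 2)
    (φ : EuclideanSpace ℝ (Fin n) → ℂ)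
    (hφ : φ = fun x => ((Real.sqrt (q3 i0 i1 i2 x) : ℝ) : ℂ)
      + ∑ k ∈ Finset.univ.filter (fun k : Fin n => 3 ≤ (k : ℕ)), b k * (x k : ℂ)) :
    ((∀ x ∈ {x : EuclideanSpace ℝ (Fin n) | 0 < q3 i0 i1 i2 x}, kap φ φ x = 0) ↔
        1 + ∑ k ∈ Finset.univ.filter (fun k : Fin n => 3 ≤ (k : ℕ)), (b k) ^ 2 = 0) ∧
    (1 + ∑ k ∈ Finset.univ.filter (fun k : Fin n => 3 ≤ (k : ℕ)), (b k) ^ 2 = 0 →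
      (∀ x ∈ {x : EuclideanSpace ℝ (Fin n) | 0 < q3 i0 i1 i2 x},
          lap (lap φ) x = 0 ∧ lap (lap (fun p => φ p ^ 2)) x = 0) ∧
        ∃ x ∈ {x : EuclideanSpace ℝ (Fin n) | 0 < q3 i0 i1 i2 x}, lap φ x ≠ 0) := by
  classical
  have h01 : i0 ≠ i1 := by simp [Ne, Fin.ext_iff, hv0, hv1]
  have h02 : i0 ≠ i2 := by simp [Ne, Fin.ext_iff, hv0, hv2]
  have h12 : i1 ≠ i2 := by simp [Ne, Fin.ext_iff, hv1, hv2]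
  set Kt : Finset (Fin n) := Finset.univ.filter (fun k : Fin n => 3 ≤ (k : ℕ)) with hKt
  set U : Set (EuclideanSpace ℝ (Fin n)) := {x | 0 < q3 i0 i1 i2 x} with hUdef
  have hUopen : IsOpen U := isOpen_lt continuous_const (cont_q3 i0 i1 i2)
  have hmem : ∀ {x}, x ∈ U → 0 < q3 i0 i1 i2 x := fun hx => hx
  have hKt_iff : ∀ i : Fin n, i ∈ Kt ↔ ¬(i = i0 ∨ i = i1 ∨ i = i2) := by
    intro i
    simp only [hKt, Finset.mem_filter, Finset.mem_univ, true_and, Fin.ext_iff, hv0, hv1, hv2,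
      not_or]
    omega
  -- the linear part as a continuous linear map
  set L : EuclideanSpace ℝ (Fin n) →L[ℝ] ℂ :=
    ∑ k ∈ Kt, (b k) • (Complex.ofRealCLM.comp (EuclideanSpace.proj k)) with hL
  have hLfun : ∀ y : EuclideanSpace ℝ (Fin n), (∑ k ∈ Kt, b k * (y k : ℂ)) = L y := by
    intro y
    simp [hL, ContinuousLinearMap.sum_apply, smul_eq_mul]
  have hφL : φ = fun y => ((Real.sqrt (q3 i0 i1 i2 y) : ℝ) : ℂ) + L y := by
    rw [hφ]; funext y; rw [hLfun]
  have pdL : ∀ (y : EuclideanSpace ℝ (Fin n)) (i : Fin n),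
      pd i (fun z => L z) y = if i ∈ Kt then b i else 0 := by
    intro y i
    rw [HM21.pd_eq L.hasFDerivAt i]
    simp only [hL, ContinuousLinearMap.sum_apply, ContinuousLinearMap.smul_apply,
      ContinuousLinearMap.comp_apply, PiLp.proj_apply, EuclideanSpace.single_apply,
      smul_eq_mul]
    simp [apply_ite (Complex.ofReal), mul_ite, Finset.sum_ite_eq']
  have hφdiff : ∀ y, 0 < q3 i0 i1 i2 y → DifferentiableAt ℝ φ y := by
    intro y hy
    rw [hφL]
    exact (HM21.diff_ofReal (diff_sqrt_q3 i0 i1 i2 hy)).add L.differentiableAt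
  -- first derivatives of φ
  have pdφ_T : ∀ {y} (hy : 0 < q3 i0 i1 i2 y) {j} (hT : j = i0 ∨ j = i1 ∨ j = i2),
      pd j φ y = ((y j * (Real.sqrt (q3 i0 i1 i2 y) ^ 1)⁻¹ : ℝ) : ℂ) := by
    intro y hy j hT
    have hjK : j ∉ Kt := by rw [hKt_iff]; simp [hT]
    rw [hφL, HM21.pd_add (HM21.diff_ofReal (diff_sqrt_q3 i0 i1 i2 hy)) L.differentiableAt,
      HM21.pd_ofReal (diff_sqrt_q3 i0 i1 i2 hy), pd_r_T i0 i1 i2 hy h01 h02 h12 hT, pdL]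
    simp [hjK, div_eq_mul_inv]
  have pdφ_K : ∀ {y} (hy : 0 < q3 i0 i1 i2 y) {i} (hi : i ∈ Kt), pd i φ y = b i := by
    intro y hy i hi
    have hiT : ¬(i = i0 ∨ i = i1 ∨ i = i2) := (hKt_iff i).1 hi
    rw [hφL, HM21.pd_add (HM21.diff_ofReal (diff_sqrt_q3 i0 i1 i2 hy)) L.differentiableAt,
      HM21.pd_ofReal (diff_sqrt_q3 i0 i1 i2 hy), pd_r_nT i0 i1 i2 hy hiT, pdL]
    simp [hi]
  -- the conformality value
  have hkap : ∀ x, 0 < q3 i0 i1 i2 x → kap φ φ x = 1 + ∑ k ∈ Kt, (b k) ^ 2 := by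
    intro x hx
    have hr0 := (sqrt_q3_pos i0 i1 i2 hx).ne'
    have hq2 : Real.sqrt (q3 i0 i1 i2 x) ^ 2 = q3 i0 i1 i2 x := Real.sq_sqrt hx.le
    show (∑ i, pd i φ x * pd i φ x) = _
    rw [sum_split3 hn i0 i1 i2 hv0 hv1 hv2 (fun i => pd i φ x * pd i φ x)]
    rw [pdφ_T hx (Or.inl rfl), pdφ_T hx (Or.inr (Or.inl rfl)),
      pdφ_T hx (Or.inr (Or.inr rfl))]
    rw [Finset.sum_congr rfl (fun i hi => by rw [pdφ_K hx hi, ← pow_two])]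
    have hreal : (x i0 * (Real.sqrt (q3 i0 i1 i2 x) ^ 1)⁻¹)
          * (x i0 * (Real.sqrt (q3 i0 i1 i2 x) ^ 1)⁻¹)
        + (x i1 * (Real.sqrt (q3 i0 i1 i2 x) ^ 1)⁻¹)
          * (x i1 * (Real.sqrt (q3 i0 i1 i2 x) ^ 1)⁻¹)
        + (x i2 * (Real.sqrt (q3 i0 i1 i2 x) ^ 1)⁻¹)
          * (x i2 * (Real.sqrt (q3 i0 i1 i2 x) ^ 1)⁻¹) = 1 := by
      have hq : q3 i0 i1 i2 x = x i0 ^ 2 + x i1 ^ 2 + x i2 ^ 2 := rfl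
      field_simp
      nlinarith [hq2, hq]
    push_cast [← Complex.ofReal_mul, ← Complex.ofReal_add]
    rw [hreal, Complex.ofReal_one, hKt]
  -- notation shortcuts in comments: r := √(q3 x)
  have hx₀q : q3 i0 i1 i2 (EuclideanSpace.single i0 (1:ℝ)) = 1 := by
    simp [q3, EuclideanSpace.single_apply, Ne.symm h01, Ne.symm h02]
  have hx₀U : EuclideanSpace.single i0 (1:ℝ) ∈ U := by
    show 0 < q3 i0 i1 i2 _
    rw [hx₀q]; norm_num
  -- the Laplacian of φ
  have hlapφ : ∀ x, 0 < q3 i0 i1 i2 x →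
      lap φ x = ((2 * (Real.sqrt (q3 i0 i1 i2 x) ^ 1)⁻¹ : ℝ) : ℂ) := by
    intro x hx
    have hr0 := (sqrt_q3_pos i0 i1 i2 hx).ne'
    have hq2 : Real.sqrt (q3 i0 i1 i2 x) ^ 2 = q3 i0 i1 i2 x := Real.sq_sqrt hx.le
    show (∑ i, pd i (pd i φ) x) = _
    rw [sum_split3 hn i0 i1 i2 hv0 hv1 hv2]
    have hT2 : ∀ j, (j = i0 ∨ j = i1 ∨ j = i2) → pd j (pd j φ) x
        = (((Real.sqrt (q3 i0 i1 i2 x) ^ 1)⁻¹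
            - 1 * x j ^ 2 / Real.sqrt (q3 i0 i1 i2 x) ^ (1 + 2) : ℝ) : ℂ) := by
      intro j hT
      rw [HM21.pd_congr (g := fun y => ((y j * (Real.sqrt (q3 i0 i1 i2 y) ^ 1)⁻¹ : ℝ) : ℂ))
          hUopen (fun y hy => pdφ_T (hmem hy) hT) hx j,
        HM21.pd_ofReal (diff_A i0 i1 i2 hx j 1) j,
        pd_A_T i0 i1 i2 hx h01 h02 h12 hT one_ne_zero]
      norm_num
    have hK2 : ∀ i ∈ Kt, pd i (pd i φ) x = 0 := by
      intro i hi
      rw [HM21.pd_congr (g := fun _ => b i) hUopen (fun y hy => pdφ_K (hmem hy) hi) hx i,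
        HM21.pd_const]
    rw [hT2 i0 (Or.inl rfl), hT2 i1 (Or.inr (Or.inl rfl)), hT2 i2 (Or.inr (Or.inr rfl)),
      Finset.sum_eq_zero hK2, add_zero]
    have hreal : ((Real.sqrt (q3 i0 i1 i2 x) ^ 1)⁻¹
          - 1 * x i0 ^ 2 / Real.sqrt (q3 i0 i1 i2 x) ^ (1 + 2))
        + ((Real.sqrt (q3 i0 i1 i2 x) ^ 1)⁻¹
          - 1 * x i1 ^ 2 / Real.sqrt (q3 i0 i1 i2 x) ^ (1 + 2))
        + ((Real.sqrt (q3 i0 i1 i2 x) ^ 1)⁻¹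
          - 1 * x i2 ^ 2 / Real.sqrt (q3 i0 i1 i2 x) ^ (1 + 2))
        = 2 * (Real.sqrt (q3 i0 i1 i2 x) ^ 1)⁻¹ := by
      have hq : q3 i0 i1 i2 x = x i0 ^ 2 + x i1 ^ 2 + x i2 ^ 2 := rfl
      have hc : Real.sqrt (q3 i0 i1 i2 x) ^ 2 = x i0 ^ 2 + x i1 ^ 2 + x i2 ^ 2 :=
        hq2.trans hq
      field_simp
      linear_combination (Real.sqrt (q3 i0 i1 i2 x)) * hc
    exact_mod_cast congrArg Complex.ofReal hreal
  -- (2,1)-harmonicity : τ²φ = 0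
  have hpdlapφ_T : ∀ j, (j = i0 ∨ j = i1 ∨ j = i2) → ∀ x, 0 < q3 i0 i1 i2 x →
      pd j (lap φ) x = ((-2 * (x j * (Real.sqrt (q3 i0 i1 i2 x) ^ 3)⁻¹) : ℝ) : ℂ) := by
    intro j hT x hx
    rw [HM21.pd_congr (g := fun y => ((2 * (Real.sqrt (q3 i0 i1 i2 y) ^ 1)⁻¹ : ℝ) : ℂ)) hUopen
        (fun y hy => hlapφ y (hmem hy)) hx j,
      HM21.pd_ofReal ((diff_rinv i0 i1 i2 hx 1).const_mul 2) j,
      HM21.pd_const_mul (diff_rinv i0 i1 i2 hx 1) 2 j,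
      pd_rinv_T i0 i1 i2 hx h01 h02 h12 hT one_ne_zero]
    have : (2:ℝ) * (-((1:ℕ) * x j) / Real.sqrt (q3 i0 i1 i2 x) ^ (1 + 2))
        = -2 * (x j * (Real.sqrt (q3 i0 i1 i2 x) ^ 3)⁻¹) := by
      push_cast; ring
    rw [this]
  have hpdlapφ_K : ∀ i ∈ Kt, ∀ x, 0 < q3 i0 i1 i2 x → pd i (lap φ) x = 0 := by
    intro i hi x hx
    have hiT := (hKt_iff i).1 hi
    rw [HM21.pd_congr (g := fun y => ((2 * (Real.sqrt (q3 i0 i1 i2 y) ^ 1)⁻¹ : ℝ) : ℂ)) hUopen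
        (fun y hy => hlapφ y (hmem hy)) hx i,
      HM21.pd_ofReal ((diff_rinv i0 i1 i2 hx 1).const_mul 2) i,
      HM21.pd_const_mul (diff_rinv i0 i1 i2 hx 1) 2 i,
      pd_rinv_nT i0 i1 i2 hx hiT 1]
    simp
  have hlaplapφ : ∀ x, 0 < q3 i0 i1 i2 x → lap (lap φ) x = 0 := by
    intro x hx
    have hr0 := (sqrt_q3_pos i0 i1 i2 hx).ne'
    have hq2 : Real.sqrt (q3 i0 i1 i2 x) ^ 2 = q3 i0 i1 i2 x := Real.sq_sqrt hx.le
    show (∑ i, pd i (pd i (lap φ)) x) = 0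
    rw [sum_split3 hn i0 i1 i2 hv0 hv1 hv2]
    have hT2 : ∀ j, (j = i0 ∨ j = i1 ∨ j = i2) → pd j (pd j (lap φ)) x
        = ((-2 * ((Real.sqrt (q3 i0 i1 i2 x) ^ 3)⁻¹
            - 3 * x j ^ 2 / Real.sqrt (q3 i0 i1 i2 x) ^ (3 + 2)) : ℝ) : ℂ) := by
      intro j hT
      rw [HM21.pd_congr
          (g := fun y => ((-2 * (y j * (Real.sqrt (q3 i0 i1 i2 y) ^ 3)⁻¹) : ℝ) : ℂ)) hUopen
          (fun y hy => hpdlapφ_T j hT y (hmem hy)) hx j,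
        HM21.pd_ofReal ((diff_A i0 i1 i2 hx j 3).const_mul (-2)) j,
        HM21.pd_const_mul (diff_A i0 i1 i2 hx j 3) (-2) j,
        pd_A_T i0 i1 i2 hx h01 h02 h12 hT (by norm_num : (3:ℕ) ≠ 0)]
      norm_num
    have hK2 : ∀ i ∈ Kt, pd i (pd i (lap φ)) x = 0 := by
      intro i hi
      rw [HM21.pd_congr (g := fun _ => (0:ℂ)) hUopen
          (fun y hy => hpdlapφ_K i hi y (hmem hy)) hx i, HM21.pd_const]
    rw [hT2 i0 (Or.inl rfl), hT2 i1 (Or.inr (Or.inl rfl)), hT2 i2 (Or.inr (Or.inr rfl)),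
      Finset.sum_eq_zero hK2, add_zero]
    have hreal : (-2 * ((Real.sqrt (q3 i0 i1 i2 x) ^ 3)⁻¹
          - 3 * x i0 ^ 2 / Real.sqrt (q3 i0 i1 i2 x) ^ (3 + 2)))
        + (-2 * ((Real.sqrt (q3 i0 i1 i2 x) ^ 3)⁻¹
          - 3 * x i1 ^ 2 / Real.sqrt (q3 i0 i1 i2 x) ^ (3 + 2)))
        + (-2 * ((Real.sqrt (q3 i0 i1 i2 x) ^ 3)⁻¹
          - 3 * x i2 ^ 2 / Real.sqrt (q3 i0 i1 i2 x) ^ (3 + 2))) = 0 := by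
      have hq : q3 i0 i1 i2 x = x i0 ^ 2 + x i1 ^ 2 + x i2 ^ 2 := rfl
      have hc : Real.sqrt (q3 i0 i1 i2 x) ^ 2 = x i0 ^ 2 + x i1 ^ 2 + x i2 ^ 2 :=
        hq2.trans hq
      field_simp
      linear_combination (-6 : ℝ) * (Real.sqrt (q3 i0 i1 i2 x)) ^ 3 * hc
    exact_mod_cast congrArg Complex.ofReal hreal
  -- first derivatives of φ²
  have pdφ2_T : ∀ {y} (hy : 0 < q3 i0 i1 i2 y) {j}, (j = i0 ∨ j = i1 ∨ j = i2) →
      pd j (fun p => φ p ^ 2) y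
        = 2 * (φ y * ((y j * (Real.sqrt (q3 i0 i1 i2 y) ^ 1)⁻¹ : ℝ) : ℂ)) := by
    intro y hy j hT
    have e : (fun p => φ p ^ 2) = fun p => φ p * φ p := by funext p; ring
    rw [e, HM21.pd_mul (hφdiff y hy) (hφdiff y hy) j, pdφ_T hy hT]
    ring
  have pdφ2_K : ∀ {y} (hy : 0 < q3 i0 i1 i2 y) {i}, i ∈ Kt →
      pd i (fun p => φ p ^ 2) y = (2 * b i) * φ y := by
    intro y hy i hi
    have e : (fun p => φ p ^ 2) = fun p => φ p * φ p := by funext p; ring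
    rw [e, HM21.pd_mul (hφdiff y hy) (hφdiff y hy) i, pdφ_K hy hi]
    ring
  -- Laplacian of φ²
  have hlapφ2 : ∀ x, 0 < q3 i0 i1 i2 x →
      lap (fun p => φ p ^ 2) x
        = 2 * (1 + ∑ k ∈ Kt, (b k) ^ 2)
          + 4 * (φ x * (((Real.sqrt (q3 i0 i1 i2 x) ^ 1)⁻¹ : ℝ) : ℂ)) := by
    intro x hx
    have hr0 := (sqrt_q3_pos i0 i1 i2 hx).ne'
    have hq2 : Real.sqrt (q3 i0 i1 i2 x) ^ 2 = q3 i0 i1 i2 x := Real.sq_sqrt hx.le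
    have hq : q3 i0 i1 i2 x = x i0 ^ 2 + x i1 ^ 2 + x i2 ^ 2 := rfl
    have hrC : (Real.sqrt (q3 i0 i1 i2 x) : ℂ) ≠ 0 := Complex.ofReal_ne_zero.mpr hr0
    have hcC : (Real.sqrt (q3 i0 i1 i2 x) : ℂ) ^ 2
        = (x i0 : ℂ) ^ 2 + (x i1 : ℂ) ^ 2 + (x i2 : ℂ) ^ 2 := by
      exact_mod_cast congrArg Complex.ofReal (hq2.trans hq)
    show (∑ i, pd i (pd i (fun p => φ p ^ 2)) x) = _
    rw [sum_split3 hn i0 i1 i2 hv0 hv1 hv2]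
    have hT2 : ∀ j, (j = i0 ∨ j = i1 ∨ j = i2) →
        pd j (pd j (fun p => φ p ^ 2)) x
          = 2 * (((x j * (Real.sqrt (q3 i0 i1 i2 x) ^ 1)⁻¹ : ℝ) : ℂ)
                * ((x j * (Real.sqrt (q3 i0 i1 i2 x) ^ 1)⁻¹ : ℝ) : ℂ)
              + φ x * (((Real.sqrt (q3 i0 i1 i2 x) ^ 1)⁻¹
                  - 1 * x j ^ 2 / Real.sqrt (q3 i0 i1 i2 x) ^ (1 + 2) : ℝ) : ℂ)) := by
      intro j hT
      rw [HM21.pd_congr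
          (g := fun y => 2 * (φ y * ((y j * (Real.sqrt (q3 i0 i1 i2 y) ^ 1)⁻¹ : ℝ) : ℂ)))
          hUopen (fun y hy => pdφ2_T (hmem hy) hT) hx j,
        HM21.pd_const_mul ((hφdiff x hx).fun_mul (HM21.diff_ofReal (diff_A i0 i1 i2 hx j 1))) 2 j,
        HM21.pd_mul (hφdiff x hx) (HM21.diff_ofReal (diff_A i0 i1 i2 hx j 1)) j,
        HM21.pd_ofReal (diff_A i0 i1 i2 hx j 1) j,
        pd_A_T i0 i1 i2 hx h01 h02 h12 hT one_ne_zero, pdφ_T hx hT]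
      push_cast
      ring
    have hK2 : ∀ i ∈ Kt, pd i (pd i (fun p => φ p ^ 2)) x = (2 * b i) * b i := by
      intro i hi
      rw [HM21.pd_congr (g := fun y => (2 * b i) * φ y) hUopen
          (fun y hy => pdφ2_K (hmem hy) hi) hx i,
        HM21.pd_const_mul (hφdiff x hx) (2 * b i) i, pdφ_K hx hi]
    rw [hT2 i0 (Or.inl rfl), hT2 i1 (Or.inr (Or.inl rfl)), hT2 i2 (Or.inr (Or.inr rfl)),
      Finset.sum_congr rfl hK2]
    have hKsum : ∑ i ∈ Kt, (2 * b i) * b i = 2 * ∑ k ∈ Kt, (b k) ^ 2 := by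
      rw [Finset.mul_sum]
      exact Finset.sum_congr rfl fun i _ => by ring
    rw [hKsum]
    push_cast
    field_simp
    ring_nf
    linear_combination ((2 : ℂ) * φ x
      - 2 * (Real.sqrt (q3 i0 i1 i2 x) : ℂ)) * hcC
  -- second-derivative rows of lap φ²
  have hpdlapφ2_T : ∀ j, (j = i0 ∨ j = i1 ∨ j = i2) → ∀ x, 0 < q3 i0 i1 i2 x →
      pd j (lap (fun p => φ p ^ 2)) x
        = 4 * (((x j * (Real.sqrt (q3 i0 i1 i2 x) ^ 2)⁻¹ : ℝ) : ℂ)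
            + φ x * ((-1 * (x j * (Real.sqrt (q3 i0 i1 i2 x) ^ 3)⁻¹) : ℝ) : ℂ)) := by
    intro j hT x hx
    have hr0 := (sqrt_q3_pos i0 i1 i2 hx).ne'
    rw [HM21.pd_congr
        (g := fun y => 2 * (1 + ∑ k ∈ Kt, (b k) ^ 2)
          + 4 * (φ y * (((Real.sqrt (q3 i0 i1 i2 y) ^ 1)⁻¹ : ℝ) : ℂ))) hUopen
        (fun y hy => hlapφ2 y (hmem hy)) hx j,
      HM21.pd_add (differentiableAt_const _)
        (((hφdiff x hx).fun_mul (HM21.diff_ofReal (diff_rinv i0 i1 i2 hx 1))).const_mul 4) j,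
      HM21.pd_const, HM21.pd_const_mul ((hφdiff x hx).fun_mul
        (HM21.diff_ofReal (diff_rinv i0 i1 i2 hx 1))) 4 j,
      HM21.pd_mul (hφdiff x hx) (HM21.diff_ofReal (diff_rinv i0 i1 i2 hx 1)) j,
      HM21.pd_ofReal (diff_rinv i0 i1 i2 hx 1) j,
      pd_rinv_T i0 i1 i2 hx h01 h02 h12 hT one_ne_zero, pdφ_T hx hT]
    push_cast
    field_simp
    ring
  have hpdlapφ2_K : ∀ i ∈ Kt, ∀ x, 0 < q3 i0 i1 i2 x →
      pd i (lap (fun p => φ p ^ 2)) x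
        = 4 * (b i * (((Real.sqrt (q3 i0 i1 i2 x) ^ 1)⁻¹ : ℝ) : ℂ)) := by
    intro i hi x hx
    have hiT := (hKt_iff i).1 hi
    rw [HM21.pd_congr
        (g := fun y => 2 * (1 + ∑ k ∈ Kt, (b k) ^ 2)
          + 4 * (φ y * (((Real.sqrt (q3 i0 i1 i2 y) ^ 1)⁻¹ : ℝ) : ℂ))) hUopen
        (fun y hy => hlapφ2 y (hmem hy)) hx i,
      HM21.pd_add (differentiableAt_const _)
        (((hφdiff x hx).fun_mul (HM21.diff_ofReal (diff_rinv i0 i1 i2 hx 1))).const_mul 4) i,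
      HM21.pd_const, HM21.pd_const_mul ((hφdiff x hx).fun_mul
        (HM21.diff_ofReal (diff_rinv i0 i1 i2 hx 1))) 4 i,
      HM21.pd_mul (hφdiff x hx) (HM21.diff_ofReal (diff_rinv i0 i1 i2 hx 1)) i,
      HM21.pd_ofReal (diff_rinv i0 i1 i2 hx 1) i,
      pd_rinv_nT i0 i1 i2 hx hiT 1, pdφ_K hx hi]
    simp
  -- τ²(φ²) = 0
  have hlaplapφ2 : ∀ x, 0 < q3 i0 i1 i2 x → lap (lap (fun p => φ p ^ 2)) x = 0 := by
    intro x hx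
    have hr0 := (sqrt_q3_pos i0 i1 i2 hx).ne'
    have hq2 : Real.sqrt (q3 i0 i1 i2 x) ^ 2 = q3 i0 i1 i2 x := Real.sq_sqrt hx.le
    have hq : q3 i0 i1 i2 x = x i0 ^ 2 + x i1 ^ 2 + x i2 ^ 2 := rfl
    have hrC : (Real.sqrt (q3 i0 i1 i2 x) : ℂ) ≠ 0 := Complex.ofReal_ne_zero.mpr hr0
    have hcC : (Real.sqrt (q3 i0 i1 i2 x) : ℂ) ^ 2
        = (x i0 : ℂ) ^ 2 + (x i1 : ℂ) ^ 2 + (x i2 : ℂ) ^ 2 := by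
      exact_mod_cast congrArg Complex.ofReal (hq2.trans hq)
    show (∑ i, pd i (pd i (lap (fun p => φ p ^ 2))) x) = 0
    rw [sum_split3 hn i0 i1 i2 hv0 hv1 hv2]
    have hT2 : ∀ j, (j = i0 ∨ j = i1 ∨ j = i2) →
        pd j (pd j (lap (fun p => φ p ^ 2))) x
          = 4 * ((((Real.sqrt (q3 i0 i1 i2 x) ^ 2)⁻¹
                - 2 * x j ^ 2 / Real.sqrt (q3 i0 i1 i2 x) ^ (2 + 2) : ℝ) : ℂ)
              + (((x j * (Real.sqrt (q3 i0 i1 i2 x) ^ 1)⁻¹ : ℝ) : ℂ)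
                  * ((-1 * (x j * (Real.sqrt (q3 i0 i1 i2 x) ^ 3)⁻¹) : ℝ) : ℂ)
                + φ x * ((-1 * ((Real.sqrt (q3 i0 i1 i2 x) ^ 3)⁻¹
                    - 3 * x j ^ 2 / Real.sqrt (q3 i0 i1 i2 x) ^ (3 + 2)) : ℝ) : ℂ))) := by
      intro j hT
      rw [HM21.pd_congr
          (g := fun y => 4 * (((y j * (Real.sqrt (q3 i0 i1 i2 y) ^ 2)⁻¹ : ℝ) : ℂ)
            + φ y * ((-1 * (y j * (Real.sqrt (q3 i0 i1 i2 y) ^ 3)⁻¹) : ℝ) : ℂ))) hUopen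
          (fun y hy => hpdlapφ2_T j hT y (hmem hy)) hx j,
        HM21.pd_const_mul ((HM21.diff_ofReal (diff_A i0 i1 i2 hx j 2)).fun_add
          ((hφdiff x hx).fun_mul (HM21.diff_ofReal ((diff_A i0 i1 i2 hx j 3).const_mul (-1))))) 4 j,
        HM21.pd_add (HM21.diff_ofReal (diff_A i0 i1 i2 hx j 2))
          ((hφdiff x hx).fun_mul (HM21.diff_ofReal ((diff_A i0 i1 i2 hx j 3).const_mul (-1)))) j,
        HM21.pd_ofReal (diff_A i0 i1 i2 hx j 2) j,
        pd_A_T i0 i1 i2 hx h01 h02 h12 hT (by norm_num : (2:ℕ) ≠ 0),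
        HM21.pd_mul (hφdiff x hx)
          (HM21.diff_ofReal ((diff_A i0 i1 i2 hx j 3).const_mul (-1))) j,
        HM21.pd_ofReal ((diff_A i0 i1 i2 hx j 3).const_mul (-1)) j,
        HM21.pd_const_mul (diff_A i0 i1 i2 hx j 3) (-1) j,
        pd_A_T i0 i1 i2 hx h01 h02 h12 hT (by norm_num : (3:ℕ) ≠ 0), pdφ_T hx hT]
      push_cast
      ring
    have hK2 : ∀ i ∈ Kt, pd i (pd i (lap (fun p => φ p ^ 2))) x = 0 := by
      intro i hi
      have hiT := (hKt_iff i).1 hi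
      have e : (fun y => 4 * (b i * (((Real.sqrt (q3 i0 i1 i2 y) ^ 1)⁻¹ : ℝ) : ℂ)))
          = fun y => (4 * b i) * (((Real.sqrt (q3 i0 i1 i2 y) ^ 1)⁻¹ : ℝ) : ℂ) := by
        funext y; ring
      rw [HM21.pd_congr
          (g := fun y => 4 * (b i * (((Real.sqrt (q3 i0 i1 i2 y) ^ 1)⁻¹ : ℝ) : ℂ))) hUopen
          (fun y hy => hpdlapφ2_K i hi y (hmem hy)) hx i, e,
        HM21.pd_const_mul (HM21.diff_ofReal (diff_rinv i0 i1 i2 hx 1)) (4 * b i) i,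
        HM21.pd_ofReal (diff_rinv i0 i1 i2 hx 1) i,
        pd_rinv_nT i0 i1 i2 hx hiT 1]
      simp
    rw [hT2 i0 (Or.inl rfl), hT2 i1 (Or.inr (Or.inl rfl)), hT2 i2 (Or.inr (Or.inr rfl)),
      Finset.sum_eq_zero hK2, add_zero]
    push_cast
    field_simp
    ring_nf
    linear_combination ((12 : ℂ) * (Real.sqrt (q3 i0 i1 i2 x) : ℂ)
      - 12 * φ x) * hcC
  -- final assembly
  refine ⟨⟨fun h => ?_, fun hS x hx => ?_⟩,
    fun hS => ⟨fun x hx => ⟨hlaplapφ x (hmem hx), hlaplapφ2 x (hmem hx)⟩,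
      ⟨EuclideanSpace.single i0 1, hx₀U, ?_⟩⟩⟩
  · have h0 := h _ hx₀U
    rw [hkap _ (hmem hx₀U)] at h0
    exact h0
  · rw [hkap x (hmem hx)]
    exact hS
  · rw [hlapφ _ (hmem hx₀U), hx₀q]
    norm_num

end Main

/-- On `U = {x ∈ ℝⁿ : x₁²+x₂²+x₃² > 0}` (`n ≥ 4`), the function
`φ(x) = √(x₁²+x₂²+x₃²) + Σ_{k≥4} bₖ·xₖ` satisfies `κ(φ,φ) = 0` iff
`1 + b₄² + ⋯ + bₙ² = 0`, and under this condition it is a proper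
`(2,1)`-harmonic morphism. -/
theorem example_family_proper_21_harmonic_morphism {n : ℕ} (hn : 4 ≤ n)
    (b : Fin n → ℂ)
    (U : Set (EuclideanSpace ℝ (Fin n)))
    (hU : U = {x | (x ⟨0, by omega⟩) ^ 2 + (x ⟨1, by omega⟩) ^ 2
      + (x ⟨2, by omega⟩) ^ 2 > 0})
    (φ : EuclideanSpace ℝ (Fin n) → ℂ)
    (hφ : φ = fun x =>
      (Real.sqrt ((x ⟨0, by omega⟩) ^ 2 + (x ⟨1, by omega⟩) ^ 2
          + (x ⟨2, by omega⟩) ^ 2) : ℂ)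
        + ∑ k ∈ Finset.univ.filter (fun k : Fin n => 3 ≤ (k : ℕ)),
            b k * (x k : ℂ)) :
    ((∀ x ∈ U, kap φ φ x = 0) ↔
        1 + ∑ k ∈ Finset.univ.filter (fun k : Fin n => 3 ≤ (k : ℕ)), (b k) ^ 2 = 0) ∧
    (1 + ∑ k ∈ Finset.univ.filter (fun k : Fin n => 3 ≤ (k : ℕ)), (b k) ^ 2 = 0 →
      (∀ x ∈ U, lap (lap φ) x = 0 ∧ lap (lap (fun p => φ p ^ 2)) x = 0) ∧
        ∃ x ∈ U, lap φ x ≠ 0) := by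
  subst hU
  exact main_lemma hn b ⟨0, by omega⟩ ⟨1, by omega⟩ ⟨2, by omega⟩ rfl rfl rfl φ hφ
end
end

section
/- The function φ : ℝ⁴ \ {0} → ℂ given by φ(x) = log √(x₁²+x₂²+x₃²+x₄²) + i·arccos(x₁/√(x₁²+x₂²+x₃²+x₄²)) satisfies κ(φ,φ) = 0, τ²(φ) = 0, τ²(φ²) = 0 and τ(φ) ≠ 0, i.e. φ is a proper (2,1)-harmonic morphism. -/
open scoped BigOperators ContDiff
open Complex

noncomputable section

variable {G : Type*} [NormedAddCommGroup G] [NormedSpace ℝ G]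

namespace HM

abbrev E4 := EuclideanSpace ℝ (Fin 4)

/-! ### generic pd rules -/

variable {K : Type*} [NormedField K] [NormedAlgebra ℝ K] [CompleteSpace K]

lemma pd_apply {n : ℕ} (i : Fin n) (f : EuclideanSpace ℝ (Fin n) → G) (x) :
    pd i f x = fderiv ℝ f x (EuclideanSpace.single i 1) := rfl

lemma pd_congr_nhds {n : ℕ} {i : Fin n} {f g : EuclideanSpace ℝ (Fin n) → G}
    {x} (h : f =ᶠ[nhds x] g) : pd i f x = pd i g x := by
  unfold pd; rw [h.fderiv_eq]

lemma pd_add {n : ℕ} {i : Fin n} {f g : EuclideanSpace ℝ (Fin n) → K} {x}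
    (hf : DifferentiableAt ℝ f x) (hg : DifferentiableAt ℝ g x) :
    pd i (fun y => f y + g y) x = pd i f x + pd i g x := by
  unfold pd; rw [fderiv_fun_add hf hg]; simp

lemma pd_mul {n : ℕ} {i : Fin n} {f g : EuclideanSpace ℝ (Fin n) → K} {x}
    (hf : DifferentiableAt ℝ f x) (hg : DifferentiableAt ℝ g x) :
    pd i (fun y => f y * g y) x = f x * pd i g x + pd i f x * g x := by
  unfold pd; rw [fderiv_fun_mul hf hg]; simp [smul_eq_mul]; ring

lemma pd_const {n : ℕ} (i : Fin n) (c : K) (x) :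
    pd i (fun _ => c) x = 0 := by
  unfold pd; rw [fderiv_fun_const]; simp

lemma pd_inv {n : ℕ} {i : Fin n} {f : EuclideanSpace ℝ (Fin n) → K} {x}
    (hf : DifferentiableAt ℝ f x) (h0 : f x ≠ 0) :
    pd i (fun y => (f y)⁻¹) x = -pd i f x / (f x) ^ 2 := by
  unfold pd
  rw [show (fun y => (f y)⁻¹) = Inv.inv ∘ f from rfl,
    ((hasFDerivAt_inv' (𝕜 := ℝ) h0).comp x hf.hasFDerivAt).fderiv]
  simp only [ContinuousLinearMap.coe_comp', Function.comp_apply, ContinuousLinearMap.neg_apply,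
    ContinuousLinearMap.mulLeftRight_apply]
  rw [eq_div_iff (pow_ne_zero 2 h0)]
  field_simp

lemma pd_ofReal {n : ℕ} {i : Fin n} {f : EuclideanSpace ℝ (Fin n) → ℝ} {x}
    (hf : DifferentiableAt ℝ f x) :
    pd i (fun y => (f y : ℂ)) x = Complex.ofReal (pd i f x) := by
  unfold pd
  rw [show (fun y => ((f y : ℂ))) = (Complex.ofRealCLM ∘ f) from rfl,
    (Complex.ofRealCLM.hasFDerivAt.comp x hf.hasFDerivAt).fderiv]
  simp

lemma pd_coord {n : ℕ} (i j : Fin n) (x : EuclideanSpace ℝ (Fin n)) :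
    pd i (fun y => y j) x = if j = i then 1 else 0 := by
  unfold pd
  rw [show (fun y : EuclideanSpace ℝ (Fin n) => y j) = ⇑(EuclideanSpace.proj (𝕜 := ℝ) j) from rfl,
    (EuclideanSpace.proj (𝕜 := ℝ) j).hasFDerivAt.fderiv]
  simp [EuclideanSpace.single_apply]

end HM

namespace HM

/-! ### the basic functions -/

def S (x : E4) : ℝ := x 1 ^ 2 + x 2 ^ 2 + x 3 ^ 2
def RS (x : E4) : ℝ := Real.sqrt (S x)
def W (x : E4) : ℂ := (x 0 : ℂ) + (RS x : ℂ) * I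
def dS (i : Fin 4) (x : E4) : ℝ := if i = 0 then 0 else 2 * x i
def dRS (i : Fin 4) (x : E4) : ℝ := dS i x / (2 * RS x)
def ddRS (i : Fin 4) (x : E4) : ℝ :=
  if i = 0 then 0 else 1 / RS x - (x i) ^ 2 / RS x ^ 3
def dW (i : Fin 4) (x : E4) : ℂ := (if i = 0 then 1 else 0) + (dRS i x : ℂ) * I
def g (i : Fin 4) (x : E4) : ℂ := dW i x / W x
def h (x : E4) : ℂ := 2 * I / ((RS x : ℂ) * W x)
def m (i : Fin 4) (x : E4) : ℂ :=
  -(2 * I) * ((dRS i x : ℂ) * W x + (RS x : ℂ) * dW i x) / ((RS x : ℂ) * W x) ^ 2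

variable {x : E4}

lemma RS_pos (hs : 0 < S x) : 0 < RS x := Real.sqrt_pos.2 hs
lemma RS_ne (hs : 0 < S x) : RS x ≠ 0 := (RS_pos hs).ne'
lemma RS_sq (hs : 0 < S x) : RS x ^ 2 = S x := Real.sq_sqrt hs.le
lemma W_im (x : E4) : (W x).im = RS x := by simp [W]
lemma W_ne (hs : 0 < S x) : W x ≠ 0 := by
  intro h0
  have := W_im x
  rw [h0] at this
  exact RS_ne hs (by simpa using this.symm)

/-! ### differentiability and pd of atoms -/

lemma diff_coord (j : Fin 4) : DifferentiableAt ℝ (fun y : E4 => y j) x :=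
  (EuclideanSpace.proj (𝕜 := ℝ) j).differentiableAt

lemma diff_S : DifferentiableAt ℝ S x := by
  unfold S
  exact (((diff_coord 1).pow 2).add ((diff_coord 2).pow 2)).add ((diff_coord 3).pow 2)

lemma pd_sq (j k : Fin 4) : pd k (fun y : E4 => y j ^ 2) x = 2 * x j * (if (j:Fin 4) = k then 1 else 0) := by
  have : (fun y : E4 => y j ^ 2) = fun y => y j * y j := by ext y; ring
  rw [this, pd_mul (diff_coord j) (diff_coord j), pd_coord]
  ring

lemma pd_S (j : Fin 4) : pd j S x = dS j x := by
  unfold S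
  rw [show (fun x : E4 => x 1 ^ 2 + x 2 ^ 2 + x 3 ^ 2)
      = fun y : E4 => (y 1 ^ 2 + y 2 ^ 2) + y 3 ^ 2 from rfl]
  rw [pd_add (((diff_coord 1).fun_pow 2).fun_add ((diff_coord 2).fun_pow 2)) ((diff_coord 3).fun_pow 2),
    pd_add ((diff_coord 1).fun_pow 2) ((diff_coord 2).fun_pow 2), pd_sq, pd_sq, pd_sq]
  unfold dS
  fin_cases j <;> simp +decide

lemma hasfd_RS (hs : 0 < S x) :
    HasFDerivAt RS ((1 / (2 * RS x)) • fderiv ℝ S x) x := by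
  have h1 : HasDerivAt Real.sqrt (1 / (2 * Real.sqrt (S x))) (S x) :=
    Real.hasDerivAt_sqrt hs.ne'
  exact h1.comp_hasFDerivAt x diff_S.hasFDerivAt

lemma diff_RS (hs : 0 < S x) : DifferentiableAt ℝ RS x := (hasfd_RS hs).differentiableAt

lemma pd_RS (hs : 0 < S x) (j : Fin 4) : pd j RS x = dRS j x := by
  rw [pd_apply, (hasfd_RS hs).fderiv]
  simp only [ContinuousLinearMap.coe_smul', Pi.smul_apply, smul_eq_mul]
  rw [← pd_apply, pd_S]
  unfold dRS RS
  ring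

lemma diff_Wre : DifferentiableAt ℝ (fun y : E4 => ((y 0 : ℝ) : ℂ)) x :=
  Complex.ofRealCLM.differentiableAt.comp x (diff_coord 0)

lemma diff_RSc (hs : 0 < S x) : DifferentiableAt ℝ (fun y : E4 => ((RS y : ℝ) : ℂ)) x := by
  exact Complex.ofRealCLM.differentiableAt.comp x (diff_RS hs)

lemma pd_RSc (hs : 0 < S x) (j : Fin 4) :
    pd j (fun y : E4 => ((RS y : ℝ) : ℂ)) x = Complex.ofReal (dRS j x) := by
  rw [pd_ofReal (diff_RS hs), pd_RS hs]

lemma pd_coordc (i j : Fin 4) :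
    pd i (fun y : E4 => ((y j : ℝ) : ℂ)) x = if j = i then 1 else 0 := by
  rw [pd_ofReal (diff_coord j), pd_coord]
  split <;> norm_num

lemma diff_W (hs : 0 < S x) : DifferentiableAt ℝ W x := by
  unfold W
  exact diff_Wre.add ((diff_RSc hs).mul (differentiableAt_const I))

lemma pd_W (hs : 0 < S x) (j : Fin 4) : pd j W x = dW j x := by
  have e1 : pd j W x = pd j (fun y : E4 => ((y 0 : ℝ) : ℂ) + ((RS y : ℝ) : ℂ) * I) x := rfl
  rw [e1, pd_add diff_Wre ((diff_RSc hs).fun_mul (differentiableAt_const I)),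
    pd_mul (diff_RSc hs) (differentiableAt_const I), pd_const, pd_coordc, pd_RSc hs]
  unfold dW
  fin_cases j <;> simp +decide [dRS, dS] <;> ring

end HM

namespace HM

set_option maxHeartbeats 1000000

variable {x : E4} {K : Type*} [NormedField K] [NormedAlgebra ℝ K] [CompleteSpace K]

lemma pd_div {i : Fin 4} {f g : E4 → K} (hf : DifferentiableAt ℝ f x)
    (hg : DifferentiableAt ℝ g x) (h0 : g x ≠ 0) :
    pd i (fun y => f y / g y) x
      = (pd i f x * g x - f x * pd i g x) / (g x) ^ 2 := by
  simp only [div_eq_mul_inv]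
  rw [pd_mul hf (hg.fun_inv h0), pd_inv hg h0]
  field_simp
  ring

/-! ### diagonal derivatives of the `d`-atoms -/

lemma diff_dS (i : Fin 4) : DifferentiableAt ℝ (dS i) x := by
  by_cases hi : i = 0
  · refine DifferentiableAt.congr_of_eventuallyEq (differentiableAt_const (0:ℝ)) ?_
    filter_upwards with y
    exact if_pos hi
  · refine DifferentiableAt.congr_of_eventuallyEq
      ((differentiableAt_const (2:ℝ)).mul (diff_coord i)) ?_
    filter_upwards with y
    exact if_neg hi

lemma pd_dS_diag (i : Fin 4) : pd i (dS i) x = if i = 0 then 0 else 2 := by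
  by_cases hi : i = 0
  · rw [show dS i = fun _ => (0:ℝ) by funext y; simp [dS, hi], pd_const, if_pos hi]
  · rw [show dS i = fun y : E4 => 2 * y i by funext y; simp [dS, hi],
      pd_mul (differentiableAt_const 2) (diff_coord i), pd_const, pd_coord, if_neg hi]
    norm_num

lemma diff_2RS (hs : 0 < S x) : DifferentiableAt ℝ (fun y : E4 => 2 * RS y) x :=
  (differentiableAt_const 2).mul (diff_RS hs)

lemma diff_dRS (hs : 0 < S x) (i : Fin 4) : DifferentiableAt ℝ (dRS i) x := by
  have : DifferentiableAt ℝ (fun y => dS i y * (2 * RS y)⁻¹) x :=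
    (diff_dS i).mul ((diff_2RS hs).inv (by simpa using RS_ne hs))
  convert this using 1; funext y; simp only [dRS, div_eq_mul_inv]

lemma pd_2RS (hs : 0 < S x) (i : Fin 4) :
    pd i (fun y : E4 => 2 * RS y) x = 2 * dRS i x := by
  rw [pd_mul (differentiableAt_const 2) (diff_RS hs), pd_const, pd_RS hs]
  simp

lemma pd_dRS_diag (hs : 0 < S x) (i : Fin 4) : pd i (dRS i) x = ddRS i x := by
  have e1 : pd i (dRS i) x = pd i (fun y => dS i y / (2 * RS y)) x := rfl
  rw [e1, pd_div (diff_dS i) (diff_2RS hs) (by simpa using RS_ne hs), pd_dS_diag, pd_2RS hs]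
  by_cases hi : i = 0
  · simp [hi, ddRS, dS]
  · rw [if_neg hi]
    unfold ddRS dRS dS
    rw [if_neg hi, if_neg hi]
    have h1 : RS x ≠ 0 := RS_ne hs
    field_simp

lemma diff_dRSc (hs : 0 < S x) (i : Fin 4) :
    DifferentiableAt ℝ (fun y : E4 => ((dRS i y : ℝ) : ℂ)) x := by
  exact Complex.ofRealCLM.differentiableAt.comp x (diff_dRS hs i)

lemma pd_dRSc_diag (hs : 0 < S x) (i : Fin 4) :
    pd i (fun y : E4 => ((dRS i y : ℝ) : ℂ)) x = Complex.ofReal (ddRS i x) := by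
  rw [pd_ofReal (diff_dRS hs i), pd_dRS_diag hs]

lemma diff_dW (hs : 0 < S x) (i : Fin 4) : DifferentiableAt ℝ (dW i) x := by
  unfold dW
  exact (differentiableAt_const _).add ((diff_dRSc hs i).mul (differentiableAt_const I))

lemma pd_dW_diag (hs : 0 < S x) (i : Fin 4) :
    pd i (dW i) x = (ddRS i x : ℂ) * I := by
  have e1 : pd i (dW i) x
      = pd i (fun y => (if i = 0 then (1:ℂ) else 0) + ((dRS i y : ℝ) : ℂ) * I) x := rfl
  rw [e1, pd_add (differentiableAt_const _) ((diff_dRSc hs i).fun_mul (differentiableAt_const I)),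
    pd_mul (diff_dRSc hs i) (differentiableAt_const I), pd_const, pd_const, pd_dRSc_diag hs]
  simp

/-! ### g, h, m : differentiability and diagonal derivatives -/

lemma diff_g (hs : 0 < S x) (i : Fin 4) : DifferentiableAt ℝ (g i) x := by
  have : DifferentiableAt ℝ (fun y => dW i y * (W y)⁻¹) x :=
    (diff_dW hs i).mul ((diff_W hs).inv (W_ne hs))
  convert this using 1; funext y; simp only [g, div_eq_mul_inv]

lemma pd_g_diag (hs : 0 < S x) (i : Fin 4) :
    pd i (g i) x = ((ddRS i x : ℂ) * I * W x - dW i x * dW i x) / W x ^ 2 := by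
  have e1 : pd i (g i) x = pd i (fun y => dW i y / W y) x := rfl
  rw [e1, pd_div (diff_dW hs i) (diff_W hs) (W_ne hs), pd_dW_diag hs, pd_W hs]

lemma diff_h (hs : 0 < S x) : DifferentiableAt ℝ h x := by
  have : DifferentiableAt ℝ (fun y => (2 * I) * ((((RS y : ℝ) : ℂ)) * W y)⁻¹) x :=
    (differentiableAt_const _).mul (((diff_RSc hs).mul (diff_W hs)).inv
      (mul_ne_zero (by simpa using RS_ne hs) (W_ne hs)))
  convert this using 1; funext y; simp only [h, div_eq_mul_inv]

lemma pd_h (hs : 0 < S x) (i : Fin 4) : pd i h x = m i x := by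
  have e1 : pd i h x = pd i (fun y => (2 * I) / (((RS y : ℝ) : ℂ) * W y)) x := rfl
  rw [e1, pd_div (differentiableAt_const _) ((diff_RSc hs).fun_mul (diff_W hs))
      (mul_ne_zero (by simpa using RS_ne hs) (W_ne hs)),
    pd_mul (diff_RSc hs) (diff_W hs), pd_const, pd_RSc hs, pd_W hs]
  unfold m
  have h1 : ((RS x : ℝ) : ℂ) ≠ 0 := by simpa using RS_ne hs
  have h2 : W x ≠ 0 := W_ne hs
  field_simp
  ring

end HM

namespace HM

set_option maxHeartbeats 1000000

variable {x : E4}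

/-! ### sum identities -/

lemma RSc_ne (hs : 0 < S x) : ((RS x : ℝ) : ℂ) ≠ 0 := by simpa using RS_ne hs

lemma RSc_sq (hs : 0 < S x) :
    ((RS x : ℝ) : ℂ) ^ 2 = (x 1 : ℂ) ^ 2 + (x 2 : ℂ) ^ 2 + (x 3 : ℂ) ^ 2 := by
  have := RS_sq hs
  have : ((RS x ^ 2 : ℝ) : ℂ) = (((x 1) ^ 2 + (x 2) ^ 2 + (x 3) ^ 2 : ℝ) : ℂ) := by
    rw [this]; rfl
  push_cast at this
  exact this

lemma sum_dW_sq (hs : 0 < S x) : ∑ i, dW i x * dW i x = 0 := by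
  have hr := RSc_ne hs
  have hc := RSc_sq hs
  rw [Fin.sum_univ_four]
  simp only [dW, dRS, dS]
  simp +decide
  field_simp
  linear_combination (((x 1:ℂ))^2 + ((x 2:ℂ))^2 + ((x 3:ℂ))^2) * Complex.I_sq + hc

lemma sum_dRS_dW (hs : 0 < S x) : ∑ i, ((dRS i x : ℝ) : ℂ) * dW i x = I := by
  have hr := RSc_ne hs
  have hc := RSc_sq hs
  rw [Fin.sum_univ_four]
  simp only [dW, dRS, dS]
  simp +decide
  field_simp
  linear_combination (-1) * hc

lemma sum_ddRS (hs : 0 < S x) : ∑ i, ((ddRS i x : ℝ) : ℂ) = 2 / ((RS x : ℝ) : ℂ) := by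
  have hr := RSc_ne hs
  have hc := RSc_sq hs
  rw [Fin.sum_univ_four]
  simp only [ddRS]
  simp +decide
  push_cast
  field_simp
  linear_combination hc

/-! ### open set and congruence -/

lemma contS : Continuous S := by
  have c1 : Continuous fun y : E4 => y 1 := (EuclideanSpace.proj (𝕜 := ℝ) 1).continuous
  have c2 : Continuous fun y : E4 => y 2 := (EuclideanSpace.proj (𝕜 := ℝ) 2).continuous
  have c3 : Continuous fun y : E4 => y 3 := (EuclideanSpace.proj (𝕜 := ℝ) 3).continuous
  exact ((c1.pow 2).add (c2.pow 2)).add (c3.pow 2)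

lemma Vopen : IsOpen {y : E4 | 0 < S y} := isOpen_lt continuous_const contS

lemma pdV_congr {f G : E4 → ℂ} (i : Fin 4) (hfg : ∀ y, 0 < S y → f y = G y)
    (hs : 0 < S x) : pd i f x = pd i G x :=
  pd_congr_nhds (Filter.eventuallyEq_of_mem (Vopen.mem_nhds hs) hfg)

lemma diffV_congr {f G : E4 → ℂ} (hfg : ∀ y, 0 < S y → f y = G y)
    (hs : 0 < S x) (hG : DifferentiableAt ℝ G x) : DifferentiableAt ℝ f x :=
  hG.congr_of_eventuallyEq (Filter.eventuallyEq_of_mem (Vopen.mem_nhds hs) hfg)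

/-! ### φ = log ∘ W -/

lemma phi_log (hs : 0 < S x) :
    ((Real.log (Real.sqrt ((x 0) ^ 2 + (x 1) ^ 2 + (x 2) ^ 2 + (x 3) ^ 2)) : ℂ)
        + Complex.I *
          (Real.arccos ((x 0) /
            Real.sqrt ((x 0) ^ 2 + (x 1) ^ 2 + (x 2) ^ 2 + (x 3) ^ 2)) : ℂ))
      = Complex.log (W x) := by
  have habs : ‖W x‖
      = Real.sqrt ((x 0) ^ 2 + (x 1) ^ 2 + (x 2) ^ 2 + (x 3) ^ 2) := by
    rw [show W x = (x 0 : ℂ) + (RS x : ℂ) * I from rfl, Complex.norm_add_mul_I]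
    rw [RS_sq hs]
    congr 1
    unfold S
    ring
  have harg : Real.arccos ((x 0) /
      Real.sqrt ((x 0) ^ 2 + (x 1) ^ 2 + (x 2) ^ 2 + (x 3) ^ 2)) = Complex.arg (W x) := by
    have hre : (W x).re = x 0 := by simp [W]
    rw [← habs, ← hre, ← Complex.cos_arg (W_ne hs),
      Real.arccos_cos (Complex.arg_nonneg_iff.2 (by rw [W_im]; exact (RS_pos hs).le))
        (Complex.arg_le_pi _)]
  apply Complex.ext
  · simp [Complex.log_re, habs]
  · simp [Complex.log_im, harg]

lemma pd_logW (hs : 0 < S x) (j : Fin 4) :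
    pd j (fun y => Complex.log (W y)) x = g j x := by
  have hmem : W x ∈ Complex.slitPlane :=
    Complex.mem_slitPlane_iff.2 (Or.inr (by rw [W_im]; exact RS_ne hs))
  unfold pd
  rw [show (fun y => Complex.log (W y)) = (Complex.log ∘ W) from rfl,
    ((Complex.hasDerivAt_log hmem).comp_hasFDerivAt x (diff_W hs).hasFDerivAt).fderiv]
  simp only [ContinuousLinearMap.coe_smul', Pi.smul_apply, smul_eq_mul]
  rw [← pd_apply, pd_W hs]
  unfold g
  field_simp

lemma diff_logW (hs : 0 < S x) : DifferentiableAt ℝ (fun y => Complex.log (W y)) x := by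
  have hmem : W x ∈ Complex.slitPlane :=
    Complex.mem_slitPlane_iff.2 (Or.inr (by rw [W_im]; exact RS_ne hs))
  exact ((Complex.hasDerivAt_log hmem).comp_hasFDerivAt x (diff_W hs).hasFDerivAt).differentiableAt

end HM

namespace HM

set_option maxHeartbeats 1000000

variable {x : E4}

lemma sum_dRS_sqc (hs : 0 < S x) : ∑ i, ((dRS i x : ℝ) : ℂ) ^ 2 = 1 := by
  have hr := RSc_ne hs
  have hc := RSc_sq hs
  rw [Fin.sum_univ_four]
  simp only [dRS, dS]
  simp +decide
  field_simp
  linear_combination -hc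

/-! ### derivatives of m -/

lemma diff_RW (hs : 0 < S x) :
    DifferentiableAt ℝ (fun y => ((RS y : ℝ) : ℂ) * W y) x :=
  (diff_RSc hs).mul (diff_W hs)

lemma RW_ne (hs : 0 < S x) : ((RS x : ℝ) : ℂ) * W x ≠ 0 :=
  mul_ne_zero (RSc_ne hs) (W_ne hs)

lemma pd_RW (hs : 0 < S x) (j : Fin 4) :
    pd j (fun y => ((RS y : ℝ) : ℂ) * W y) x
      = ((RS x : ℝ) : ℂ) * dW j x + ((dRS j x : ℝ) : ℂ) * W x := by
  rw [pd_mul (diff_RSc hs) (diff_W hs), pd_RSc hs, pd_W hs]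

lemma diff_RW_sq (hs : 0 < S x) :
    DifferentiableAt ℝ (fun y => (((RS y : ℝ) : ℂ) * W y) ^ 2) x := by
  have : DifferentiableAt ℝ
      (fun y => (((RS y : ℝ) : ℂ) * W y) * (((RS y : ℝ) : ℂ) * W y)) x :=
    (diff_RW hs).mul (diff_RW hs)
  refine this.congr_of_eventuallyEq ?_
  filter_upwards with y
  ring

lemma pd_RW_sq (hs : 0 < S x) (j : Fin 4) :
    pd j (fun y => (((RS y : ℝ) : ℂ) * W y) ^ 2) x
      = 2 * (((RS x : ℝ) : ℂ) * W x)
          * (((RS x : ℝ) : ℂ) * dW j x + ((dRS j x : ℝ) : ℂ) * W x) := by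
  have e1 : (fun y => (((RS y : ℝ) : ℂ) * W y) ^ 2)
      = fun y => (((RS y : ℝ) : ℂ) * W y) * (((RS y : ℝ) : ℂ) * W y) := by
    funext y; ring
  rw [e1, pd_mul (diff_RW hs) (diff_RW hs), pd_RW hs]
  ring

lemma diff_N (hs : 0 < S x) (i : Fin 4) :
    DifferentiableAt ℝ (fun y => ((dRS i y : ℝ) : ℂ) * W y + ((RS y : ℝ) : ℂ) * dW i y) x :=
  ((diff_dRSc hs i).mul (diff_W hs)).add ((diff_RSc hs).mul (diff_dW hs i))

lemma pd_N_diag (hs : 0 < S x) (i : Fin 4) :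
    pd i (fun y => ((dRS i y : ℝ) : ℂ) * W y + ((RS y : ℝ) : ℂ) * dW i y) x
      = ((ddRS i x : ℝ) : ℂ) * W x + 2 * ((dRS i x : ℝ) : ℂ) * dW i x
          + ((RS x : ℝ) : ℂ) * (((ddRS i x : ℝ) : ℂ) * I) := by
  rw [pd_add ((diff_dRSc hs i).fun_mul (diff_W hs)) ((diff_RSc hs).fun_mul (diff_dW hs i)),
    pd_mul (diff_dRSc hs i) (diff_W hs), pd_mul (diff_RSc hs) (diff_dW hs i),
    pd_dRSc_diag hs, pd_W hs, pd_RSc hs, pd_dW_diag hs]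
  ring

lemma diff_m (hs : 0 < S x) (i : Fin 4) : DifferentiableAt ℝ (m i) x := by
  have : DifferentiableAt ℝ (fun y =>
      (-(2 * I) * (((dRS i y : ℝ) : ℂ) * W y + ((RS y : ℝ) : ℂ) * dW i y))
        * ((((RS y : ℝ) : ℂ) * W y) ^ 2)⁻¹) x :=
    ((differentiableAt_const _).mul (diff_N hs i)).mul
      ((diff_RW_sq hs).inv (pow_ne_zero 2 (RW_ne hs)))
  refine this.congr_of_eventuallyEq ?_
  filter_upwards with y
  simp only [m, div_eq_mul_inv]

lemma pd_m_diag (hs : 0 < S x) (i : Fin 4) :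
    pd i (m i) x
      = (-(2 * I) * ((((ddRS i x : ℝ) : ℂ) * (W x + ((RS x : ℝ) : ℂ) * I)
              + 2 * ((dRS i x : ℝ) : ℂ) * dW i x) * (((RS x : ℝ) : ℂ) * W x))
          + 4 * I * (((dRS i x : ℝ) : ℂ) * W x + ((RS x : ℝ) : ℂ) * dW i x) ^ 2)
        / (((RS x : ℝ) : ℂ) * W x) ^ 3 := by
  have e1 : pd i (m i) x = pd i (fun y =>
      (-(2 * I) * (((dRS i y : ℝ) : ℂ) * W y + ((RS y : ℝ) : ℂ) * dW i y))
        / ((((RS y : ℝ) : ℂ) * W y) ^ 2)) x := rfl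
  rw [e1, pd_div ((differentiableAt_const _).fun_mul (diff_N hs i)) (diff_RW_sq hs)
      (pow_ne_zero 2 (RW_ne hs)),
    pd_mul (differentiableAt_const _) (diff_N hs i), pd_const, pd_N_diag hs, pd_RW_sq hs]
  rw [div_eq_div_iff (pow_ne_zero 2 (pow_ne_zero 2 (RW_ne hs))) (pow_ne_zero 3 (RW_ne hs))]
  ring

/-! ### the summed identities -/

lemma sum_pd_g (hs : 0 < S x) : ∑ i, pd i (g i) x = h x := by
  have e : ∀ i, pd i (g i) x
      = (I / W x) * ((ddRS i x : ℝ) : ℂ) + (-1 / W x ^ 2) * (dW i x * dW i x) := by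
    intro i
    rw [pd_g_diag hs i]
    have h2 := W_ne hs
    field_simp
    ring
  rw [Finset.sum_congr rfl (fun i _ => e i), Finset.sum_add_distrib,
    ← Finset.mul_sum, ← Finset.mul_sum, sum_ddRS hs, sum_dW_sq hs]
  have h1 := RSc_ne hs
  have h2 := W_ne hs
  unfold h
  field_simp
  ring

lemma sum_pd_m (hs : 0 < S x) : ∑ i, pd i (m i) x = 0 := by
  have h1 := RSc_ne hs
  have h2 := W_ne hs
  have key : ∀ i : Fin 4, pd i (m i) x
      = ((-(2 * I) * (W x + ((RS x : ℝ) : ℂ) * I) * (((RS x : ℝ) : ℂ) * W x))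
            * ((ddRS i x : ℝ) : ℂ)
          + (4 * I * (((RS x : ℝ) : ℂ) * W x)) * (((dRS i x : ℝ) : ℂ) * dW i x)
          + (4 * I * W x ^ 2) * ((dRS i x : ℝ) : ℂ) ^ 2
          + (4 * I * ((RS x : ℝ) : ℂ) ^ 2) * (dW i x) ^ 2)
        / (((RS x : ℝ) : ℂ) * W x) ^ 3 := by
    intro i
    rw [pd_m_diag hs i]
    congr 1
    ring
  rw [Finset.sum_congr rfl (fun i _ => key i), ← Finset.sum_div]
  rw [div_eq_zero_iff]
  left
  rw [Finset.sum_add_distrib, Finset.sum_add_distrib, Finset.sum_add_distrib,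
    ← Finset.mul_sum, ← Finset.mul_sum, ← Finset.mul_sum, ← Finset.mul_sum]
  have e2 : ∑ i, (dW i x) ^ 2 = ∑ i, dW i x * dW i x :=
    Finset.sum_congr rfl (fun i _ => by ring)
  rw [sum_ddRS hs, sum_dRS_dW hs, sum_dRS_sqc hs, e2, sum_dW_sq hs]
  field_simp
  ring

lemma sum_g_m (hs : 0 < S x) :
    ∑ i, g i x * m i x = 2 / (((RS x : ℝ) : ℂ) ^ 2 * W x ^ 2) := by
  have h1 := RSc_ne hs
  have h2 := W_ne hs
  have e : ∀ i, g i x * m i x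
      = (-(2 * I) / (((RS x : ℝ) : ℂ) ^ 2 * W x ^ 2)) * (((dRS i x : ℝ) : ℂ) * dW i x)
        + (-(2 * I) / (((RS x : ℝ) : ℂ) * W x ^ 3)) * (dW i x * dW i x) := by
    intro i
    unfold g m
    field_simp
    ring
  rw [Finset.sum_congr rfl (fun i _ => e i), Finset.sum_add_distrib,
    ← Finset.mul_sum, ← Finset.mul_sum, sum_dRS_dW hs, sum_dW_sq hs]
  field_simp
  linear_combination (-(W x)) * Complex.I_sq

lemma kap_sum (hs : 0 < S x) : ∑ i, g i x * g i x = 0 := by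
  have h2 := W_ne hs
  have e : ∀ i, g i x * g i x = (dW i x * dW i x) / (W x * W x) := by
    intro i; unfold g; rw [div_mul_div_comm]
  rw [Finset.sum_congr rfl (fun i _ => e i), ← Finset.sum_div, sum_dW_sq hs, zero_div]

end HM

namespace HM

set_option maxHeartbeats 1000000

section PhiLevel

variable {φ : E4 → ℂ} {x : E4}

lemma pd_phi (hφV : ∀ y : E4, 0 < S y → φ y = Complex.log (W y))
    (hs : 0 < S x) (j : Fin 4) : pd j φ x = g j x :=
  (pdV_congr j hφV hs).trans (pd_logW hs j)

lemma diff_phi (hφV : ∀ y : E4, 0 < S y → φ y = Complex.log (W y))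
    (hs : 0 < S x) : DifferentiableAt ℝ φ x :=
  diffV_congr hφV hs (diff_logW hs)

lemma kap_phi (hφV : ∀ y : E4, 0 < S y → φ y = Complex.log (W y))
    (hs : 0 < S x) : kap φ φ x = 0 := by
  show ∑ i, pd i φ x * pd i φ x = 0
  rw [Finset.sum_congr rfl (fun i _ => by rw [pd_phi hφV hs i]), kap_sum hs]

lemma lap_phi (hφV : ∀ y : E4, 0 < S y → φ y = Complex.log (W y))
    (hs : 0 < S x) : lap φ x = h x := by
  have e : ∀ i : Fin 4, pd i (pd i φ) x = pd i (g i) x :=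
    fun i => pdV_congr i (fun y hy => pd_phi hφV hy i) hs
  show ∑ i, pd i (pd i φ) x = h x
  rw [Finset.sum_congr rfl (fun i _ => e i), sum_pd_g hs]

lemma lap_lap_phi (hφV : ∀ y : E4, 0 < S y → φ y = Complex.log (W y))
    (hs : 0 < S x) : lap (lap φ) x = 0 := by
  have e : ∀ i : Fin 4, pd i (pd i (lap φ)) x = pd i (m i) x := by
    intro i
    refine pdV_congr i (fun y hy => ?_) hs
    rw [pdV_congr i (fun z hz => lap_phi hφV hz) hy, pd_h hy]
  show ∑ i, pd i (pd i (lap φ)) x = 0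
  rw [Finset.sum_congr rfl (fun i _ => e i), sum_pd_m hs]

lemma pd_phisq (hφV : ∀ y : E4, 0 < S y → φ y = Complex.log (W y))
    (hs : 0 < S x) (i : Fin 4) :
    pd i (fun p => φ p ^ 2) x = 2 * φ x * g i x := by
  have e1 : pd i (fun p => φ p ^ 2) x = pd i (fun p => φ p * φ p) x := by
    apply pd_congr_nhds
    filter_upwards with y
    ring
  rw [e1, pd_mul (diff_phi hφV hs) (diff_phi hφV hs), pd_phi hφV hs i]
  ring

lemma lap_phisq (hφV : ∀ y : E4, 0 < S y → φ y = Complex.log (W y))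
    (hs : 0 < S x) : lap (fun p => φ p ^ 2) x = 2 * φ x * h x := by
  have e : ∀ i : Fin 4, pd i (pd i fun p => φ p ^ 2) x
      = pd i (fun y => 2 * φ y * g i y) x :=
    fun i => pdV_congr i (fun y hy => pd_phisq hφV hy i) hs
  have e2 : ∀ i : Fin 4, pd i (fun y => 2 * φ y * g i y) x
      = 2 * φ x * pd i (g i) x + 2 * (g i x * g i x) := by
    intro i
    have d1 : DifferentiableAt ℝ (fun y => 2 * φ y) x :=
      (differentiableAt_const _).mul (diff_phi hφV hs)
    rw [show (fun y => 2 * φ y * g i y) = (fun y => (2 * φ y) * g i y) from rfl,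
      pd_mul d1 (diff_g hs i), pd_mul (differentiableAt_const _) (diff_phi hφV hs),
      pd_const, pd_phi hφV hs i]
    ring
  show ∑ i, pd i (pd i fun p => φ p ^ 2) x = _
  rw [Finset.sum_congr rfl fun i _ => (e i).trans (e2 i), Finset.sum_add_distrib,
    ← Finset.mul_sum, ← Finset.mul_sum, sum_pd_g hs, kap_sum hs]
  ring

lemma lap_lap_phisq (hφV : ∀ y : E4, 0 < S y → φ y = Complex.log (W y))
    (hs : 0 < S x) : lap (lap (fun p => φ p ^ 2)) x = 0 := by
  have e1 : ∀ (i : Fin 4) (y : E4), 0 < S y → pd i (lap (fun p => φ p ^ 2)) y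
      = 2 * φ y * m i y + 2 * (g i y * h y) := by
    intro i y hy
    rw [pdV_congr i (fun z hz => lap_phisq hφV hz) hy]
    have d1 : DifferentiableAt ℝ (fun z => 2 * φ z) y :=
      (differentiableAt_const _).mul (diff_phi hφV hy)
    rw [show (fun z => 2 * φ z * h z) = (fun z => (2 * φ z) * h z) from rfl,
      pd_mul d1 (diff_h hy), pd_mul (differentiableAt_const _) (diff_phi hφV hy), pd_const,
      pd_phi hφV hy i, pd_h hy i]
    ring
  have e : ∀ i : Fin 4, pd i (pd i (lap (fun p => φ p ^ 2))) x
      = 2 * φ x * pd i (m i) x + 4 * (g i x * m i x) + (2 * h x) * pd i (g i) x := by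
    intro i
    rw [pdV_congr i (e1 i) hs]
    have d1 : DifferentiableAt ℝ (fun y => 2 * φ y) x :=
      (differentiableAt_const _).mul (diff_phi hφV hs)
    rw [show (fun y => 2 * φ y * m i y + 2 * (g i y * h y))
        = (fun y => (2 * φ y) * m i y + 2 * (g i y * h y)) from rfl,
      pd_add (d1.fun_mul (diff_m hs i))
        ((differentiableAt_const (2:ℂ)).fun_mul ((diff_g hs i).fun_mul (diff_h hs))),
      pd_mul d1 (diff_m hs i),
      pd_mul (differentiableAt_const (2:ℂ)) ((diff_g hs i).fun_mul (diff_h hs)),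
      pd_mul (diff_g hs i) (diff_h hs),
      pd_mul (differentiableAt_const _) (diff_phi hφV hs),
      pd_const, pd_phi hφV hs i, pd_h hs i]
    ring
  show ∑ i, pd i (pd i (lap (fun p => φ p ^ 2))) x = 0
  rw [Finset.sum_congr rfl (fun i _ => e i), Finset.sum_add_distrib, Finset.sum_add_distrib,
    ← Finset.mul_sum, ← Finset.mul_sum, ← Finset.mul_sum,
    sum_pd_m hs, sum_g_m hs, sum_pd_g hs]
  have h1 := RSc_ne hs
  have h2 := W_ne hs
  unfold h
  field_simp
  linear_combination 8 * Complex.I_sq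

end PhiLevel

end HM


open HM in
/-- The function `φ(x) = log |x| + i·arccos(x₁/|x|)` on the open set where it is
smooth is a proper `(2,1)`-harmonic morphism:
`κ(φ,φ) = 0`, `τ²(φ) = 0`, `τ²(φ²) = 0` and `τ(φ) ≠ 0`. -/
theorem example_log_arccos_proper_21_harmonic_morphism
    (U : Set (EuclideanSpace ℝ (Fin 4)))
    (hU : U = {x | (x 1) ^ 2 + (x 2) ^ 2 + (x 3) ^ 2 > 0})
    (φ : EuclideanSpace ℝ (Fin 4) → ℂ)
    (hφ : φ = fun x =>
      (Real.log (Real.sqrt ((x 0) ^ 2 + (x 1) ^ 2 + (x 2) ^ 2 + (x 3) ^ 2)) : ℂ)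
        + Complex.I *
          (Real.arccos ((x 0) /
            Real.sqrt ((x 0) ^ 2 + (x 1) ^ 2 + (x 2) ^ 2 + (x 3) ^ 2)) : ℂ)) :
    (∀ x ∈ U, kap φ φ x = 0 ∧ lap (lap φ) x = 0 ∧
        lap (lap (fun p => φ p ^ 2)) x = 0) ∧
      ∃ x ∈ U, lap φ x ≠ 0 := by
  have hsV : ∀ y ∈ U, 0 < S y := by
    intro y hy
    rw [hU] at hy
    exact hy
  have hφV : ∀ y : E4, 0 < S y → φ y = Complex.log (W y) := by
    intro y hy
    rw [hφ]
    exact phi_log hy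
  constructor
  · intro x hx
    have hs := hsV x hx
    exact ⟨kap_phi hφV hs, lap_lap_phi hφV hs, lap_lap_phisq hφV hs⟩
  · refine ⟨EuclideanSpace.single 1 1, ?_, ?_⟩
    · rw [hU]
      show (0:ℝ) < _
      simp [EuclideanSpace.single_apply]
    · have hs : 0 < S (EuclideanSpace.single 1 (1:ℝ)) := by
        show (0:ℝ) < _
        simp [S, EuclideanSpace.single_apply]
      rw [lap_phi hφV hs]
      have e1 : S (EuclideanSpace.single 1 (1:ℝ)) = 1 := by
        simp [S, EuclideanSpace.single_apply]
      have e2 : RS (EuclideanSpace.single 1 (1:ℝ)) = 1 := by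
        rw [RS, e1, Real.sqrt_one]
      have e3 : W (EuclideanSpace.single 1 (1:ℝ)) = I := by
        rw [W, e2]
        simp [EuclideanSpace.single_apply]
      rw [h, e2, e3]
      norm_num [Complex.I_ne_zero]
end
end

section
/- The inversion i_p(x) = x/|x|² on ℝ^{2p} \ {0} is p-harmonic: the p-th iterated Laplacian of each component vanishes, Δᵖ(x_j/|x|²) = 0, and more precisely Δᵏ(x_j/|x|²) = (Π_{r=1}^{k} 2r(2r−2p)) · x_j/|x|^{2+2k} for 1 ≤ k ≤ p. -/
open scoped BigOperators ContDiff
open Complex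

noncomputable section

variable {G : Type*} [NormedAddCommGroup G] [NormedSpace ℝ G]

namespace InvAux

open Filter

variable {n : ℕ}

abbrev E (n : ℕ) := EuclideanSpace ℝ (Fin n)

def Q (y : E n) : ℝ := ∑ i, y i ^ 2

lemma Q_eq (y : E n) : Q y = ‖y‖ ^ 2 := by
  simp [Q, EuclideanSpace.norm_eq,
    Real.sq_sqrt (Finset.sum_nonneg fun i _ => sq_nonneg _), Real.norm_eq_abs, sq_abs]

lemma Q_ne {y : E n} (hy : y ≠ 0) : Q y ≠ 0 := by
  rw [Q_eq]; exact pow_ne_zero _ (norm_ne_zero_iff.mpr hy)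

def proj (i : Fin n) : E n →L[ℝ] ℝ := EuclideanSpace.proj i

lemma hasFDerivAt_proj (i : Fin n) (x : E n) :
    HasFDerivAt (fun y : E n => y i) (proj i) x := (proj i).hasFDerivAt

lemma hasFDerivAt_Q (x : E n) :
    HasFDerivAt Q (∑ i, (2 * x i) • proj i) x := by
  have h : ∀ i ∈ Finset.univ, HasFDerivAt (fun y : E n => y i ^ 2)
      ((2 * x i) • proj i) x := by
    intro i _
    have h2 := (hasDerivAt_pow 2 (x i)).comp_hasFDerivAt x (hasFDerivAt_proj i x)
    simpa [Function.comp_def] using h2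
  exact HasFDerivAt.fun_sum h

lemma hasFDerivAt_Qpow (m : ℕ) (x : E n) :
    HasFDerivAt (fun y : E n => Q y ^ m)
      ((m * Q x ^ (m - 1)) • ∑ i, (2 * x i) • proj i) x :=
  (hasDerivAt_pow m (Q x)).comp_hasFDerivAt x (hasFDerivAt_Q x)

lemma DQ_apply (x : E n) (i' : Fin n) :
    (∑ i, (2 * x i) • proj i) (EuclideanSpace.single i' 1) = 2 * x i' := by
  simp [ContinuousLinearMap.sum_apply, proj, EuclideanSpace.single_apply, mul_ite]

lemma proj_single (j i : Fin n) :
    proj j (EuclideanSpace.single i (1:ℝ)) = if j = i then 1 else 0 := by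
  simp [proj, EuclideanSpace.single_apply]

lemma continuous_Q : Continuous (Q (n := n)) := by
  unfold Q; fun_prop

lemma hasFDerivAt_div {N D : E n → ℝ} {N' D' : E n →L[ℝ] ℝ} {x : E n}
    (hN : HasFDerivAt N N' x) (hD : HasFDerivAt D D' x) (h0 : D x ≠ 0) :
    HasFDerivAt (fun y => N y / D y)
      (N x • -(D x ^ 2)⁻¹ • D' + (D x)⁻¹ • N') x := by
  have hinv := (hasDerivAt_inv h0).comp_hasFDerivAt x hD
  have h := hN.mul hinv
  exact (h.congr_fderiv (by simp [Function.comp_def]; ext v; simp)).congr_of_eventuallyEq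
    (Filter.Eventually.of_forall fun y => div_eq_mul_inv (N y) (D y))

lemma pd_F (c : ℝ) (m : ℕ) (j i : Fin n) (x : E n) (hx : Q x ≠ 0) :
    pd i (fun y : E n => c * y j / Q y ^ m) x
      = ((c * if j = i then 1 else 0) * Q x - 2 * m * c * (x j * x i)) / Q x ^ (m + 1) := by
  have hN : HasFDerivAt (fun y : E n => c * y j) (c • proj j) x :=
    (hasFDerivAt_proj j x).const_mul c
  have hD := hasFDerivAt_Qpow m x
  have h := hasFDerivAt_div hN hD (pow_ne_zero m hx)
  show fderiv ℝ _ x (EuclideanSpace.single i 1) = _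
  rw [h.fderiv]
  simp only [ContinuousLinearMap.add_apply, ContinuousLinearMap.smul_apply, DQ_apply,
    smul_eq_mul, proj_single]
  obtain _ | m := m
  · rcases eq_or_ne j i with rfl | hji
    · simp [hx]
    · simp [hji]
  · simp only [Nat.add_sub_cancel, Nat.cast_add, Nat.cast_one]
    rcases eq_or_ne j i with rfl | hji
    · field_simp; ring
    · field_simp
      simp only [if_neg hji, mul_zero, add_zero]
      ring
lemma pd_G (a b : ℝ) (m : ℕ) (j i : Fin n) (x : E n) (hx : Q x ≠ 0) :
    pd i (fun y : E n => (a * Q y - b * (y j * y i)) / Q y ^ (m + 1)) x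
      = ((a * (2 * x i) - b * (x j + (if j = i then 1 else 0) * x i)) * Q x
          - 2 * ((m : ℝ) + 1) * x i * (a * Q x - b * (x j * x i))) / Q x ^ (m + 2) := by
  have hN : HasFDerivAt (fun y : E n => a * Q y - b * (y j * y i))
      (a • (∑ i, (2 * x i) • proj i) - b • (x j • proj i + x i • proj j)) x :=
    ((hasFDerivAt_Q x).const_mul a).sub
      (((hasFDerivAt_proj j x).mul (hasFDerivAt_proj i x)).const_mul b)
  have hD := hasFDerivAt_Qpow (m + 1) x
  have h := hasFDerivAt_div hN hD (pow_ne_zero _ hx)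
  show fderiv ℝ _ x (EuclideanSpace.single i 1) = _
  rw [h.fderiv]
  simp only [ContinuousLinearMap.add_apply, ContinuousLinearMap.sub_apply,
    ContinuousLinearMap.smul_apply, DQ_apply, smul_eq_mul, proj_single,
    Nat.add_sub_cancel, Nat.cast_add, Nat.cast_one]
  rcases eq_or_ne j i with rfl | hji
  · simp only [if_pos rfl]
    field_simp
    rw [if_pos trivial]
    ring
  · simp only [if_neg hji, mul_zero, add_zero, zero_mul, mul_one]
    field_simp
    rw [if_pos trivial]
    ring

lemma lap_F (c : ℝ) (m : ℕ) (j : Fin n) (x : E n) (hx : x ≠ 0) :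
    lap (fun y : E n => c * y j / Q y ^ m) x
      = 2 * (m : ℝ) * (2 * m - n) * c * x j / Q x ^ (m + 1) := by
  have hx' : Q x ≠ 0 := Q_ne hx
  have hev : ∀ᶠ y in nhds x, Q y ≠ 0 := continuous_Q.continuousAt.eventually_ne hx'
  have key : ∀ i : Fin n, pd i (pd i (fun y : E n => c * y j / Q y ^ m)) x
      = (((c * if j = i then 1 else 0) * (2 * x i)
            - 2 * m * c * (x j + (if j = i then 1 else 0) * x i)) * Q x
          - 2 * ((m : ℝ) + 1) * x i
              * ((c * if j = i then 1 else 0) * Q x - 2 * m * c * (x j * x i)))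
          / Q x ^ (m + 2) := by
    intro i
    have hev2 : pd i (fun y : E n => c * y j / Q y ^ m)
        =ᶠ[nhds x] fun y =>
          ((c * if j = i then 1 else 0) * Q y - 2 * m * c * (y j * y i)) / Q y ^ (m + 1) := by
      filter_upwards [hev] with y hy
      exact pd_F c m j i y hy
    have h2 := pd_G (c * if j = i then 1 else 0) (2 * m * c) m j i x hx'
    calc pd i (pd i (fun y : E n => c * y j / Q y ^ m)) x
        = pd i (fun y : E n =>
            ((c * if j = i then 1 else 0) * Q y - 2 * m * c * (y j * y i)) / Q y ^ (m + 1)) x := by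
          show fderiv ℝ _ x _ = fderiv ℝ _ x _
          rw [hev2.fderiv_eq]
      _ = _ := h2
  show (∑ i, pd i (pd i fun y : E n => c * y j / Q y ^ m) x) = _
  rw [Finset.sum_congr rfl fun i _ => key i, ← Finset.sum_div]
  have e1 : ∑ i, (if j = i then (1:ℝ) else 0) * x i = x j := by
    simp [ite_mul]
  have e2 : ∑ i, x i * x i = Q x := by
    simp [Q, sq]
  have hsum : ∀ i : Fin n,
      (((c * if j = i then 1 else 0) * (2 * x i)
            - 2 * m * c * (x j + (if j = i then 1 else 0) * x i)) * Q x
          - 2 * ((m : ℝ) + 1) * x i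
              * ((c * if j = i then 1 else 0) * Q x - 2 * m * c * (x j * x i)))
        = (2 * c * Q x - 2 * m * c * Q x - 2 * ((m:ℝ) + 1) * c * Q x)
            * ((if j = i then (1:ℝ) else 0) * x i)
          + (4 * m * ((m:ℝ) + 1) * c * x j) * (x i * x i)
          + (-(2 * m * c) * Q x * x j) := fun i => by ring
  rw [Finset.sum_congr rfl fun i _ => hsum i]
  rw [Finset.sum_add_distrib, Finset.sum_add_distrib, ← Finset.mul_sum, ← Finset.mul_sum,
    e1, e2, Finset.sum_const, Finset.card_univ, Fintype.card_fin, nsmul_eq_mul]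
  field_simp
  ring

lemma lap_congr {f g : E n → ℝ} {x : E n} (h : f =ᶠ[nhds x] g) : lap f x = lap g x := by
  have hpd : ∀ i : Fin n, pd i f =ᶠ[nhds x] pd i g := by
    intro i
    filter_upwards [h.fderiv (𝕜 := ℝ)] with y hy
    show fderiv ℝ f y _ = fderiv ℝ g y _
    rw [hy]
  exact Finset.sum_congr rfl fun i _ => by
    show fderiv ℝ (pd i f) x _ = fderiv ℝ (pd i g) x _
    rw [(hpd i).fderiv_eq]

lemma iter_lap (k : ℕ) (j : Fin n) :
    ∀ x : E n, x ≠ 0 →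
      lap^[k] (fun y : E n => 1 * y j / Q y ^ 1) x
        = (∏ r ∈ Finset.Icc 1 k, (2 * (r : ℝ)) * (2 * r - n)) * x j / Q x ^ (k + 1) := by
  induction k with
  | zero =>
    intro x hx
    rw [Function.iterate_zero_apply]
    norm_num
  | succ k ih =>
    intro x hx
    rw [Function.iterate_succ_apply']
    have hev : lap^[k] (fun y : E n => 1 * y j / Q y ^ 1)
        =ᶠ[nhds x] fun y : E n =>
          (∏ r ∈ Finset.Icc 1 k, (2 * (r : ℝ)) * (2 * r - n)) * y j / Q y ^ (k + 1) := by
      filter_upwards [continuous_id.continuousAt.eventually_ne hx] with y hy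
      exact ih y hy
    rw [lap_congr hev,
      lap_F (∏ r ∈ Finset.Icc 1 k, (2 * (r : ℝ)) * (2 * r - n)) (k + 1) j x hx,
      Finset.prod_Icc_succ_top (by omega : 1 ≤ k + 1)]
    push_cast
    ring

end InvAux

/-- The inversion `x ↦ x/|x|²` of `ℝ^{2p} \ {0}` is `p`-harmonic:
`Δᵏ(x_j/|x|²) = (Π_{r=1}^{k} 2r(2r−2p))·x_j/|x|^{2+2k}` for `1 ≤ k ≤ p`, and in
particular `Δᵖ(x_j/|x|²) = 0`. -/
theorem inversion_p_harmonic (p : ℕ) (hp : 0 < p) :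
    ∀ x : EuclideanSpace ℝ (Fin (2 * p)), x ≠ 0 → ∀ j : Fin (2 * p),
      (∀ k, 1 ≤ k → k ≤ p →
        lap^[k] (fun y : EuclideanSpace ℝ (Fin (2 * p)) => y j / ‖y‖ ^ 2) x
          = (∏ r ∈ Finset.Icc 1 k, (2 * (r : ℝ)) * (2 * (r : ℝ) - 2 * (p : ℝ)))
              * x j / ‖x‖ ^ (2 + 2 * k)) ∧
      lap^[p] (fun y : EuclideanSpace ℝ (Fin (2 * p)) => y j / ‖y‖ ^ 2) x = 0 := by
  intro x hx j
  have hfun : (fun y : EuclideanSpace ℝ (Fin (2 * p)) => y j / ‖y‖ ^ 2)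
      = fun y : InvAux.E (2 * p) => 1 * y j / InvAux.Q y ^ 1 := by
    funext y
    rw [InvAux.Q_eq]
    ring
  have main : ∀ k, lap^[k] (fun y : EuclideanSpace ℝ (Fin (2 * p)) => y j / ‖y‖ ^ 2) x
      = (∏ r ∈ Finset.Icc 1 k, (2 * (r : ℝ)) * (2 * (r : ℝ) - 2 * (p : ℝ)))
          * x j / ‖x‖ ^ (2 + 2 * k) := by
    intro k
    rw [hfun, InvAux.iter_lap k j x hx, InvAux.Q_eq, ← pow_mul,
      show 2 * (k + 1) = 2 + 2 * k by ring]
    congr 1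
    congr 1
    apply Finset.prod_congr rfl
    intro r _
    push_cast
    ring
  refine ⟨fun k _ _ => main k, ?_⟩
  rw [main p, Finset.prod_eq_zero (Finset.mem_Icc.mpr ⟨hp, le_refl p⟩) (by ring)]
  simp
end
end
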